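/- arXiv:1202.5908 — 3 statements merged into one kernel-verified Lean document; each statement's English description precedes it below -/
import Mathlib

section
/- There exists a constant C, independent of ε and N, such that ‖E − E^I‖_{L^∞(Ω_s)} ≤ C N^{-5/2} for each E ∈ {E_1, E_2, E_12}, and ‖E_1 − E_1^I‖_{L^∞(Ω_2)} ≤ C N^{-5/2}. -/
open MeasureTheory Real Set

noncomputable section

/-- First-order partial derivative in the x-direction. -/
def pdx (f : ℝ × ℝ → ℝ) : ℝ × ℝ → ℝ := fun p => fderiv ℝ f p (1, 0)

/-- First-order partial derivative in the y-direction. -/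
def pdy (f : ℝ × ℝ → ℝ) : ℝ × ℝ → ℝ := fun p => fderiv ℝ f p (0, 1)

/-- Mixed partial derivative `∂_x^i ∂_y^j`. -/
def pd (i j : ℕ) (f : ℝ × ℝ → ℝ) : ℝ × ℝ → ℝ := pdx^[i] (pdy^[j] f)

/-- A function coincides with a bilinear polynomial `a + bx + cy + dxy` on a set. -/
def IsBilinearOn (f : ℝ × ℝ → ℝ) (s : Set (ℝ × ℝ)) : Prop :=
  ∃ a b c d : ℝ, ∀ p ∈ s, f p = a + b * p.1 + c * p.2 + d * (p.1 * p.2)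

/-- The Shishkin-mesh node abscissas. -/
def meshX (N : ℕ) (lx : ℝ) (i : ℕ) : ℝ :=
  if i ≤ N / 2 then 2 * (i : ℝ) * (1 - lx) / (N : ℝ)
  else 1 - 2 * ((N : ℝ) - (i : ℝ)) * lx / (N : ℝ)

/-- The Shishkin-mesh node ordinates. -/
def meshY (N : ℕ) (ly : ℝ) (j : ℕ) : ℝ :=
  if j ≤ N / 3 then 3 * (j : ℝ) * ly / (N : ℝ)
  else if j ≤ 2 * N / 3 then
    (3 * (j : ℝ) / (N : ℝ) - 1) - 3 * (2 * (j : ℝ) - (N : ℝ)) * ly / (N : ℝ)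
  else 1 - 3 * ((N : ℝ) - (j : ℝ)) * ly / (N : ℝ)

/-- The mesh rectangle `τ_{ij} = [x_{i-1}, x_i] × [y_{j-1}, y_j]`. -/
def meshRect (N : ℕ) (lx ly : ℝ) (i j : ℕ) : Set (ℝ × ℝ) :=
  Icc (meshX N lx (i - 1)) (meshX N lx i) ×ˢ Icc (meshY N ly (j - 1)) (meshY N ly j)

def OmegaS (lx ly : ℝ) : Set (ℝ × ℝ) := Icc 0 (1 - lx) ×ˢ Icc ly (1 - ly)
def Omega1R (lx ly : ℝ) : Set (ℝ × ℝ) := Icc (1 - lx) 1 ×ˢ Icc ly (1 - ly)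
def Omega2R (lx ly : ℝ) : Set (ℝ × ℝ) := Icc 0 (1 - lx) ×ˢ (Icc 0 ly ∪ Icc (1 - ly) 1)
def Omega12R (lx ly : ℝ) : Set (ℝ × ℝ) := Icc (1 - lx) 1 ×ˢ (Icc 0 ly ∪ Icc (1 - ly) 1)

/-- Basic assumptions on the Shishkin mesh data (with `ρ = 2.5`). -/
def ShishkinHyp (N : ℕ) (ε β lx ly : ℝ) : Prop :=
  0 < N ∧ 6 ∣ N ∧ 0 < ε ∧ ε ≤ (N : ℝ)⁻¹ ∧ 0 < β ∧
  lx = 2.5 * ε / β * Real.log (N : ℝ) ∧ ly = 2.5 * Real.sqrt ε * Real.log (N : ℝ) ∧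
  lx ≤ 1 / 2 ∧ ly ≤ 1 / 4

/-- `gI` is the piecewise-bilinear nodal interpolant of `g` on the Shishkin mesh. -/
def IsMeshInterpolant (N : ℕ) (lx ly : ℝ) (g gI : ℝ × ℝ → ℝ) : Prop :=
  Continuous gI ∧
  (∀ i j : ℕ, 1 ≤ i → i ≤ N → 1 ≤ j → j ≤ N → IsBilinearOn gI (meshRect N lx ly i j)) ∧
  (∀ i j : ℕ, i ≤ N → j ≤ N →
    gI (meshX N lx i, meshY N ly j) = g (meshX N lx i, meshY N ly j))

def UnitSq : Set (ℝ × ℝ) := Icc 0 1 ×ˢ Icc 0 1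

/-- Bounds on the regular part `S` of the solution decomposition. -/
def BoundS (C0 : ℝ) (S : ℝ × ℝ → ℝ) : Prop :=
  ContDiff ℝ 3 S ∧ ∀ i j : ℕ, i + j ≤ 3 → ∀ p ∈ UnitSq, |pd i j S p| ≤ C0

/-- Bounds on the exponential-layer part `E₁`. -/
def BoundE1 (ε β C0 : ℝ) (E1 : ℝ × ℝ → ℝ) : Prop :=
  ContDiff ℝ 3 E1 ∧ ∀ i j : ℕ, i + j ≤ 3 → ∀ p ∈ UnitSq,
    |pd i j E1 p| ≤ C0 * ε ^ (-(i : ℝ)) * Real.exp (-β * (1 - p.1) / ε)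

/-- Bounds on the characteristic-layer part `E₂`. -/
def BoundE2 (ε C0 : ℝ) (E2 : ℝ × ℝ → ℝ) : Prop :=
  ContDiff ℝ 3 E2 ∧ ∀ i j : ℕ, i + j ≤ 3 → ∀ p ∈ UnitSq,
    |pd i j E2 p| ≤ C0 * ε ^ (-(j : ℝ) / 2) *
      (Real.exp (-p.2 / Real.sqrt ε) + Real.exp (-(1 - p.2) / Real.sqrt ε))

/-- Bounds on the corner-layer part `E₁₂`. -/
def BoundE12 (ε β C0 : ℝ) (E12 : ℝ × ℝ → ℝ) : Prop :=
  ContDiff ℝ 3 E12 ∧ ∀ i j : ℕ, i + j ≤ 3 → ∀ p ∈ UnitSq,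
    |pd i j E12 p| ≤ C0 * ε ^ (-((i : ℝ) + (j : ℝ) / 2)) * Real.exp (-β * (1 - p.1) / ε) *
      (Real.exp (-p.2 / Real.sqrt ε) + Real.exp (-(1 - p.2) / Real.sqrt ε))

/-- Membership in the bilinear finite element space `V^N`. -/
def MemVN (N : ℕ) (lx ly : ℝ) (v : ℝ × ℝ → ℝ) : Prop :=
  Continuous v ∧
  (∀ p ∈ UnitSq, (p.1 = 0 ∨ p.1 = 1 ∨ p.2 = 0 ∨ p.2 = 1) → v p = 0) ∧
  ∀ i j : ℕ, 1 ≤ i → i ≤ N → 1 ≤ j → j ≤ N → IsBilinearOn v (meshRect N lx ly i j)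

/-- The SDFEM stabilization parameter `δ`. -/
def sdDelta (N : ℕ) (lx ly Cstar : ℝ) : ℝ × ℝ → ℝ :=
  (OmegaS lx ly ∪ Omega2R lx ly).indicator fun _ => Cstar / (N : ℝ)

/-- The SDFEM bilinear form `B`. -/
def Bform (N : ℕ) (lx ly ε b c Cstar : ℝ) (v w : ℝ × ℝ → ℝ) : ℝ :=
  ∫ p in UnitSq,
    (ε * (pdx v p * pdx w p + pdy v p * pdy w p)
      + (b * pdx v p + c * v p) * w p
      + (b * pdx v p + c * v p) * (sdDelta N lx ly Cstar p * (b * pdx w p)))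

/-- The square of the SDFEM energy norm `|||·|||`. -/
def energySq (N : ℕ) (lx ly ε b c Cstar : ℝ) (v : ℝ × ℝ → ℝ) : ℝ :=
  ∫ p in UnitSq,
    ((ε + b ^ 2 * sdDelta N lx ly Cstar p) * pdx v p ^ 2
      + ε * pdy v p ^ 2 + c * v p ^ 2)

/-- The neighbourhood `Ω₀` of the point `(xs, ys)`. -/
def OmegaZero (N : ℕ) (xs ys K sx sy : ℝ) : Set (ℝ × ℝ) :=
  {p : ℝ × ℝ | p ∈ Ioo (0 : ℝ) 1 ×ˢ Ioo (0 : ℝ) 1 ∧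
    p.1 - xs ≤ K * sx * Real.log (N : ℝ) ∧ |p.2 - ys| ≤ K * sy * Real.log (N : ℝ)}

/-- `Ω₀'`: the smallest union of mesh rectangles containing `Ω₀`. -/
def OmegaZero' (N : ℕ) (lx ly xs ys K sx sy : ℝ) : Set (ℝ × ℝ) :=
  ⋃ i ∈ Finset.Icc 1 N, ⋃ j ∈ Finset.Icc 1 N,
    ⋃ (_ : volume (OmegaZero N xs ys K sx sy ∩ meshRect N lx ly i j) ≠ 0),
      meshRect N lx ly i j

lemma affine_bound' {A B u v t M : ℝ} (hu : u ≤ t) (hv : t ≤ v)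
    (h1 : |A + B * u| ≤ M) (h2 : |A + B * v| ≤ M) : |A + B * t| ≤ M := by
  rw [abs_le] at *
  rcases le_total 0 B with h | h
  · constructor <;> nlinarith [mul_le_mul_of_nonneg_left hu h, mul_le_mul_of_nonneg_left hv h]
  · constructor <;> nlinarith [mul_le_mul_of_nonpos_left hu h, mul_le_mul_of_nonpos_left hv h]

lemma bilinear_bound' {a b c d x0 x1 y0 y1 x y M : ℝ}
    (hx0 : x0 ≤ x) (hx1 : x ≤ x1) (hy0 : y0 ≤ y) (hy1 : y ≤ y1)
    (h00 : |a + b*x0 + c*y0 + d*(x0*y0)| ≤ M)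
    (h10 : |a + b*x1 + c*y0 + d*(x1*y0)| ≤ M)
    (h01 : |a + b*x0 + c*y1 + d*(x0*y1)| ≤ M)
    (h11 : |a + b*x1 + c*y1 + d*(x1*y1)| ≤ M) :
    |a + b*x + c*y + d*(x*y)| ≤ M := by
  have e0 : |(a + c*y) + (b + d*y)*x0| ≤ M := by
    rw [show (a + c*y) + (b + d*y)*x0 = (a + b*x0) + (c + d*x0)*y by ring]
    refine affine_bound' hy0 hy1 ?_ ?_
    · rw [show (a + b*x0) + (c + d*x0)*y0 = a + b*x0 + c*y0 + d*(x0*y0) by ring]; exact h00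
    · rw [show (a + b*x0) + (c + d*x0)*y1 = a + b*x0 + c*y1 + d*(x0*y1) by ring]; exact h01
  have e1 : |(a + c*y) + (b + d*y)*x1| ≤ M := by
    rw [show (a + c*y) + (b + d*y)*x1 = (a + b*x1) + (c + d*x1)*y by ring]
    refine affine_bound' hy0 hy1 ?_ ?_
    · rw [show (a + b*x1) + (c + d*x1)*y0 = a + b*x1 + c*y0 + d*(x1*y0) by ring]; exact h10
    · rw [show (a + b*x1) + (c + d*x1)*y1 = a + b*x1 + c*y1 + d*(x1*y1) by ring]; exact h11
  rw [show a + b*x + c*y + d*(x*y) = (a + c*y) + (b + d*y)*x by ring]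
  exact affine_bound' hx0 hx1 e0 e1

lemma exists_sandwich (g : ℕ → ℝ) (m n : ℕ) (t : ℝ) (hmn : m < n)
    (h1 : g m ≤ t) (h2 : t ≤ g n) :
    ∃ k, m < k ∧ k ≤ n ∧ g (k - 1) ≤ t ∧ t ≤ g k := by
  classical
  have hex : ∃ k, m < k ∧ k ≤ n ∧ t ≤ g k := ⟨n, hmn, le_rfl, h2⟩
  obtain ⟨hk1, hk2, hk3⟩ := Nat.find_spec hex
  refine ⟨Nat.find hex, hk1, hk2, ?_, hk3⟩
  rcases Nat.lt_or_ge (Nat.find hex - 1) (m + 1) with h | h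
  · have : Nat.find hex - 1 = m := by omega
    rw [this]; exact h1
  · have hlt : Nat.find hex - 1 < Nat.find hex := by omega
    have hmin := Nat.find_min hex hlt
    by_contra hc
    push_neg at hc
    exact hmin ⟨by omega, by omega, le_of_lt hc⟩

lemma meshX_coarse (N : ℕ) (lx : ℝ) (i : ℕ) (h : i ≤ N / 2) :
    meshX N lx i = 2 * (i:ℝ) * (1 - lx) / (N:ℝ) := if_pos h

lemma meshX_zero (N : ℕ) (lx : ℝ) : meshX N lx 0 = 0 := by
  simp [meshX]

lemma meshX_half (N : ℕ) (hN : 0 < N) (h2 : 2 ∣ N) (lx : ℝ) :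
    meshX N lx (N / 2) = 1 - lx := by
  rw [meshX_coarse _ _ _ le_rfl]
  obtain ⟨m, rfl⟩ := h2
  have hm : 0 < m := by omega
  rw [Nat.mul_div_cancel_left _ (by norm_num)]
  have : ((2*m : ℕ) : ℝ) = 2 * m := by push_cast; ring
  rw [this]
  have hm' : (0:ℝ) < m := by exact_mod_cast hm
  field_simp

lemma meshX_mem (N : ℕ) (hN : 0 < N) (lx : ℝ) (hlx : 0 ≤ lx) (hlx1 : lx ≤ 1)
    (i : ℕ) (h : i ≤ N / 2) : 0 ≤ meshX N lx i ∧ meshX N lx i ≤ 1 - lx := by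
  rw [meshX_coarse _ _ _ h]
  have h2 : (2 * i : ℝ) ≤ (N:ℝ) := by exact_mod_cast (by omega : 2 * i ≤ N)
  have hN' : (0:ℝ) < N := by exact_mod_cast hN
  have h1 : (0:ℝ) ≤ 1 - lx := by linarith
  constructor
  · positivity
  · rw [div_le_iff₀ hN']; nlinarith

lemma meshY_facts (N : ℕ) (h6 : 6 ∣ N) (hN : 0 < N) (ly : ℝ) (hly : 0 ≤ ly)
    (hly1 : ly ≤ 1/4) :
    meshY N ly 0 = 0 ∧ meshY N ly N = 1 ∧ meshY N ly (N/3) = ly ∧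
    meshY N ly (2*N/3) = 1 - ly ∧
    (∀ j, j ≤ N → 0 ≤ meshY N ly j ∧ meshY N ly j ≤ 1) ∧
    (∀ j, N/3 ≤ j → j ≤ 2*N/3 → ly ≤ meshY N ly j ∧ meshY N ly j ≤ 1 - ly) := by
  obtain ⟨k, rfl⟩ := h6
  have hk : 0 < k := by omega
  have hk' : (0:ℝ) < k := by exact_mod_cast hk
  have hN' : (0:ℝ) < ((6*k : ℕ):ℝ) := by exact_mod_cast hN
  have hcast : ((6*k : ℕ):ℝ) = 6 * (k:ℝ) := by push_cast; ring
  have seg1 : ∀ j : ℕ, j ≤ 2*k → meshY (6*k) ly j = 3 * (j:ℝ) * ly / (6*(k:ℝ)) := by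
    intro j hj
    rw [meshY, if_pos (by omega : j ≤ 6*k/3), hcast]
  have seg2 : ∀ j : ℕ, 2*k ≤ j → j ≤ 4*k →
      meshY (6*k) ly j = ly + (3*(j:ℝ)/(6*(k:ℝ)) - 1) * (1 - 2*ly) := by
    intro j hj1 hj2
    rcases eq_or_lt_of_le hj1 with rfl | hlt
    · rw [seg1 _ le_rfl]
      push_cast
      field_simp
      ring
    · rw [meshY, if_neg (by omega : ¬ j ≤ 6*k/3), if_pos (by omega : j ≤ 2*(6*k)/3), hcast]
      field_simp
      ring
  have seg3 : ∀ j : ℕ, 4*k ≤ j → j ≤ 6*k →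
      meshY (6*k) ly j = 1 - 3 * (6*(k:ℝ) - (j:ℝ)) * ly / (6*(k:ℝ)) := by
    intro j hj1 hj2
    rcases eq_or_lt_of_le hj1 with rfl | hlt
    · rw [seg2 _ (by omega) le_rfl]
      push_cast
      field_simp
      ring
    · rw [meshY, if_neg (by omega : ¬ j ≤ 6*k/3), if_neg (by omega : ¬ j ≤ 2*(6*k)/3), hcast]
  have hmid : ∀ j : ℕ, 2*k ≤ j → j ≤ 4*k →
      ly ≤ meshY (6*k) ly j ∧ meshY (6*k) ly j ≤ 1 - ly := by
    intro j hj1 hj2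
    rw [seg2 j hj1 hj2]
    have hj1' : (2*k : ℝ) ≤ (j:ℝ) := by exact_mod_cast hj1
    have hj2' : (j:ℝ) ≤ 4*k := by exact_mod_cast hj2
    have h0 : 0 ≤ 3*(j:ℝ)/(6*(k:ℝ)) - 1 := by
      rw [le_sub_iff_add_le, zero_add, le_div_iff₀ (by positivity)]; nlinarith
    have h1 : 3*(j:ℝ)/(6*(k:ℝ)) - 1 ≤ 1 := by
      rw [sub_le_iff_le_add, div_le_iff₀ (by positivity)]; nlinarith
    constructor
    · nlinarith
    · nlinarith
  refine ⟨?_, ?_, ?_, ?_, ?_, ?_⟩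
  · rw [seg1 0 (by omega)]; simp
  · rw [seg3 (6*k) (by omega) le_rfl]
    push_cast; field_simp; ring
  · have : 6*k/3 = 2*k := by omega
    rw [this, seg1 _ le_rfl]
    push_cast
    field_simp
    ring
  · have : 2*(6*k)/3 = 4*k := by omega
    rw [this, seg2 _ (by omega) le_rfl]
    push_cast
    field_simp
    ring
  · intro j hj
    rcases le_or_gt j (2*k) with h | h
    · rw [seg1 j h]
      have hj' : (3*(j:ℝ)) ≤ 6*(k:ℝ) := by exact_mod_cast (by omega : 3*j ≤ 6*k)
      constructor
      · positivity
      · rw [div_le_one (by positivity)]; nlinarith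
    · rcases le_or_gt j (4*k) with h' | h'
      · have := hmid j (le_of_lt h) h'
        constructor <;> nlinarith [this.1, this.2]
      · rw [seg3 j (le_of_lt h') hj]
        have h1 : (j:ℝ) ≤ 6*(k:ℝ) := by exact_mod_cast (by omega : j ≤ 6*k)
        have h2 : (4*k:ℝ) ≤ (j:ℝ) := by exact_mod_cast (le_of_lt h')
        constructor
        · have : 3 * (6*(k:ℝ) - (j:ℝ)) * ly / (6*(k:ℝ)) ≤ 1 := by
            rw [div_le_one (by positivity)]; nlinarith
          linarith
        · have : 0 ≤ 3 * (6*(k:ℝ) - (j:ℝ)) * ly / (6*(k:ℝ)) := by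
            apply div_nonneg _ (by positivity)
            nlinarith
          linarith
  · intro j hj1 hj2
    have e1 : 6*k/3 = 2*k := by omega
    have e2 : 2*(6*k)/3 = 4*k := by omega
    rw [e1] at hj1; rw [e2] at hj2
    exact hmid j hj1 hj2

set_option maxHeartbeats 2000000 in
/-- Layer interpolation errors in `L^∞`: `‖E − E^I‖_{L^∞(Ω_s)} ≤ C N^{-5/2}` for each
`E ∈ {E₁, E₂, E₁₂}`, and `‖E₁ − E₁^I‖_{L^∞(Ω₂)} ≤ C N^{-5/2}`. -/
theorem layer_interpolation_Linf (β C0 : ℝ) (hβ : 0 < β) (hC0 : 0 < C0) :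
    ∃ C : ℝ, 0 < C ∧
      ∀ (N : ℕ) (ε lx ly : ℝ) (E1 E2 E12 EI1 EI2 EI12 : ℝ × ℝ → ℝ),
        ShishkinHyp N ε β lx ly →
        BoundE1 ε β C0 E1 → BoundE2 ε C0 E2 → BoundE12 ε β C0 E12 →
        IsMeshInterpolant N lx ly E1 EI1 →
        IsMeshInterpolant N lx ly E2 EI2 →
        IsMeshInterpolant N lx ly E12 EI12 →
        (∀ p ∈ OmegaS lx ly, |E1 p - EI1 p| ≤ C * (N : ℝ) ^ (-(5 / 2 : ℝ))) ∧
        (∀ p ∈ OmegaS lx ly, |E2 p - EI2 p| ≤ C * (N : ℝ) ^ (-(5 / 2 : ℝ))) ∧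
        (∀ p ∈ OmegaS lx ly, |E12 p - EI12 p| ≤ C * (N : ℝ) ^ (-(5 / 2 : ℝ))) ∧
        (∀ p ∈ Omega2R lx ly, |E1 p - EI1 p| ≤ C * (N : ℝ) ^ (-(5 / 2 : ℝ))) := by
  refine ⟨4 * C0, by positivity, ?_⟩
  intro N ε lx ly E1 E2 E12 EI1 EI2 EI12 hSh hB1 hB2 hB12 hI1 hI2 hI12
  obtain ⟨hN, h6, hε, hεN, hβ', hlx, hly, hlxh, hlyq⟩ := hSh
  have hN6 : 6 ≤ N := Nat.le_of_dvd hN h6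
  have h2N : 2 ∣ N := dvd_trans (by norm_num) h6
  have hN' : (0:ℝ) < N := by exact_mod_cast hN
  have hN1 : (1:ℝ) ≤ N := by exact_mod_cast hN
  have hlog : 0 ≤ Real.log N := Real.log_nonneg hN1
  have hsε : 0 < Real.sqrt ε := Real.sqrt_pos.mpr hε
  have hlx0 : 0 ≤ lx := by rw [hlx]; positivity
  have hly0 : 0 ≤ ly := by rw [hly]; positivity
  set R : ℝ := (N:ℝ) ^ (-(5 / 2 : ℝ)) with hR
  have hR0 : 0 < R := Real.rpow_pos_of_pos hN' _
  have hRexp : R = Real.exp (-(5/2 * Real.log N)) := by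
    rw [hR, Real.rpow_def_of_pos hN']; ring_nf
  -- exponential bounds
  have hxexp : ∀ x : ℝ, x ≤ 1 - lx → Real.exp (-β * (1 - x) / ε) ≤ R := by
    intro x hx
    have hx' : 2.5 * ε / β * Real.log N ≤ 1 - x := by rw [← hlx]; linarith
    have h2 : β * (2.5 * ε / β * Real.log N) = 2.5 * ε * Real.log N := by field_simp
    have key : -β * (1 - x) / ε ≤ -(5/2 * Real.log N) := by
      rw [div_le_iff₀ hε]
      nlinarith [mul_le_mul_of_nonneg_left hx' (le_of_lt hβ)]
    rw [hRexp]
    exact Real.exp_le_exp.mpr key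
  have hyexp1 : ∀ y : ℝ, ly ≤ y → Real.exp (-y / Real.sqrt ε) ≤ R := by
    intro y hy
    have hy' : 2.5 * Real.sqrt ε * Real.log N ≤ y := by rw [← hly]; linarith
    have key : -y / Real.sqrt ε ≤ -(5/2 * Real.log N) := by
      rw [div_le_iff₀ hsε]
      nlinarith
    rw [hRexp]
    exact Real.exp_le_exp.mpr key
  have hyexp2 : ∀ y : ℝ, y ≤ 1 - ly → Real.exp (-(1 - y) / Real.sqrt ε) ≤ R := by
    intro y hy
    have hy' : 2.5 * Real.sqrt ε * Real.log N ≤ 1 - y := by rw [← hly]; linarith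
    have key : -(1 - y) / Real.sqrt ε ≤ -(5/2 * Real.log N) := by
      rw [div_le_iff₀ hsε]
      nlinarith
    rw [hRexp]
    exact Real.exp_le_exp.mpr key
  -- pointwise bounds on the layer parts
  have hE1pt : ∀ q : ℝ × ℝ, q ∈ UnitSq → q.1 ≤ 1 - lx → |E1 q| ≤ 2 * C0 * R := by
    intro q hq hqx
    have hb := hB1.2 0 0 (by norm_num) q hq
    simp only [pd, Function.iterate_zero, id_eq, Nat.cast_zero, neg_zero,
      Real.rpow_zero, mul_one] at hb
    have hxr := hxexp q.1 hqx
    have hcr : 0 ≤ C0 * R := by positivity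
    calc |E1 q| ≤ C0 * Real.exp (-β * (1 - q.1) / ε) := hb
      _ ≤ C0 * R := mul_le_mul_of_nonneg_left hxr hC0.le
      _ ≤ 2 * C0 * R := by linarith
  have hE2pt : ∀ q : ℝ × ℝ, q ∈ UnitSq → ly ≤ q.2 → q.2 ≤ 1 - ly → |E2 q| ≤ 2 * C0 * R := by
    intro q hq hq1 hq2
    have hb := hB2.2 0 0 (by norm_num) q hq
    simp only [pd, Function.iterate_zero, id_eq, Nat.cast_zero, neg_zero, zero_div,
      Real.rpow_zero, mul_one, one_mul] at hb
    have e1 := hyexp1 q.2 hq1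
    have e2 := hyexp2 q.2 hq2
    calc |E2 q| ≤ C0 * (Real.exp (-q.2 / Real.sqrt ε) + Real.exp (-(1 - q.2) / Real.sqrt ε)) := hb
      _ ≤ C0 * (R + R) := mul_le_mul_of_nonneg_left (add_le_add e1 e2) hC0.le
      _ = 2 * C0 * R := by ring
  have hE12pt : ∀ q : ℝ × ℝ, q ∈ UnitSq → q.1 ≤ 1 - lx → |E12 q| ≤ 2 * C0 * R := by
    intro q hq hqx
    have hq' : q ∈ UnitSq := hq
    simp only [UnitSq, Set.mem_prod, Set.mem_Icc] at hq'
    have hb := hB12.2 0 0 (by norm_num) q hq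
    simp only [pd, Function.iterate_zero, id_eq, Nat.cast_zero, neg_zero, zero_div,
      add_zero, Real.rpow_zero, mul_one, one_mul] at hb
    have e0 := hxexp q.1 hqx
    have e1 : Real.exp (-q.2 / Real.sqrt ε) ≤ 1 := by
      rw [Real.exp_le_one_iff]
      apply div_nonpos_of_nonpos_of_nonneg (by linarith [hq'.2.1]) (le_of_lt hsε)
    have e2 : Real.exp (-(1 - q.2) / Real.sqrt ε) ≤ 1 := by
      rw [Real.exp_le_one_iff]
      apply div_nonpos_of_nonpos_of_nonneg (by linarith [hq'.2.2]) (le_of_lt hsε)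
    have p1 := Real.exp_pos (-q.2 / Real.sqrt ε)
    have p2 := Real.exp_pos (-(1 - q.2) / Real.sqrt ε)
    have p0 := Real.exp_pos (-β * (1 - q.1) / ε)
    calc |E12 q| ≤ C0 * Real.exp (-β * (1 - q.1) / ε) *
          (Real.exp (-q.2 / Real.sqrt ε) + Real.exp (-(1 - q.2) / Real.sqrt ε)) := hb
      _ ≤ C0 * R * 2 := by
          have s1 : Real.exp (-q.2 / Real.sqrt ε) + Real.exp (-(1 - q.2) / Real.sqrt ε) ≤ 2 := by
            linarith
          exact mul_le_mul (mul_le_mul_of_nonneg_left e0 hC0.le) s1 (by positivity) (by positivity)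
      _ = 2 * C0 * R := by ring
  -- mesh facts
  obtain ⟨hy0, hyN, hyl, hyr, hymem, hymid⟩ := meshY_facts N h6 hN ly hly0 hlyq
  have hlx1 : lx ≤ 1 := by linarith
  have hXmem := meshX_mem N hN lx hlx0 hlx1
  have hxfind : ∀ t : ℝ, 0 ≤ t → t ≤ 1 - lx →
      ∃ i, 1 ≤ i ∧ i ≤ N / 2 ∧ meshX N lx (i - 1) ≤ t ∧ t ≤ meshX N lx i := by
    intro t h0 h1
    obtain ⟨i, hi1, hi2, hi3, hi4⟩ := exists_sandwich (meshX N lx) 0 (N / 2) t (by omega)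
      (by rw [meshX_zero]; exact h0) (by rw [meshX_half N hN h2N]; exact h1)
    exact ⟨i, hi1, hi2, hi3, hi4⟩
  -- generic interpolation bound on a mesh rectangle
  have key : ∀ (E EI : ℝ × ℝ → ℝ), IsMeshInterpolant N lx ly E EI →
      ∀ (G : Set (ℝ × ℝ)), (∀ q ∈ G, |E q| ≤ 2 * C0 * R) →
      ∀ (p : ℝ × ℝ) (i j : ℕ), 1 ≤ i → i ≤ N → 1 ≤ j → j ≤ N →
      meshX N lx (i - 1) ≤ p.1 → p.1 ≤ meshX N lx i →
      meshY N ly (j - 1) ≤ p.2 → p.2 ≤ meshY N ly j →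
      p ∈ G → (meshX N lx (i - 1), meshY N ly (j - 1)) ∈ G →
      (meshX N lx i, meshY N ly (j - 1)) ∈ G →
      (meshX N lx (i - 1), meshY N ly j) ∈ G →
      (meshX N lx i, meshY N ly j) ∈ G →
      |E p - EI p| ≤ 4 * C0 * R := by
    intro E EI hI G hG p i j hi1 hiN hj1 hjN ha hb' hc' hd' hpG h00 h10 h01 h11
    obtain ⟨-, hbil, hnode⟩ := hI
    obtain ⟨a, b, c, d, hab⟩ := hbil i j hi1 hiN hj1 hjN
    have hcor : ∀ (u v : ℕ), u ≤ N → v ≤ N → (meshX N lx u, meshY N ly v) ∈ G →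
        (meshX N lx u, meshY N ly v) ∈ meshRect N lx ly i j →
        |a + b * meshX N lx u + c * meshY N ly v + d * (meshX N lx u * meshY N ly v)|
          ≤ 2 * C0 * R := by
      intro u v hu hv hG' hm
      have e1 := hab _ hm
      have e2 := hnode u v hu hv
      dsimp only at e1
      rw [← e1, e2]
      exact hG _ hG'
    have hmem : ∀ u v : ℝ, meshX N lx (i - 1) ≤ u → u ≤ meshX N lx i →
        meshY N ly (j - 1) ≤ v → v ≤ meshY N ly j → (u, v) ∈ meshRect N lx ly i j :=
      fun u v h1 h2 h3 h4 => ⟨⟨h1, h2⟩, ⟨h3, h4⟩⟩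
    have H00 := hcor (i - 1) (j - 1) (by omega) (by omega) h00
      (hmem _ _ le_rfl (ha.trans hb') le_rfl (hc'.trans hd'))
    have H10 := hcor i (j - 1) (by omega) (by omega) h10
      (hmem _ _ (ha.trans hb') le_rfl le_rfl (hc'.trans hd'))
    have H01 := hcor (i - 1) j (by omega) (by omega) h01
      (hmem _ _ le_rfl (ha.trans hb') (hc'.trans hd') le_rfl)
    have H11 := hcor i j (by omega) (by omega) h11
      (hmem _ _ (ha.trans hb') le_rfl (hc'.trans hd') le_rfl)
    have hpm : p ∈ meshRect N lx ly i j := ⟨⟨ha, hb'⟩, hc', hd'⟩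
    have hEIp : |EI p| ≤ 2 * C0 * R := by
      rw [hab p hpm]
      exact bilinear_bound' ha hb' hc' hd' H00 H10 H01 H11
    have hEp := hG p hpG
    have htri : |E p - EI p| ≤ |E p| + |EI p| := by
      rw [sub_eq_add_neg]
      exact (abs_add_le _ _).trans (by rw [abs_neg])
    linarith
  -- bound on Ω_s
  have hOmegaS : ∀ (E EI : ℝ × ℝ → ℝ), IsMeshInterpolant N lx ly E EI →
      (∀ q : ℝ × ℝ, q ∈ UnitSq → q.1 ≤ 1 - lx → ly ≤ q.2 → q.2 ≤ 1 - ly → |E q| ≤ 2 * C0 * R) →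
      ∀ p ∈ OmegaS lx ly, |E p - EI p| ≤ 4 * C0 * R := by
    intro E EI hI hGbd p hp
    simp only [OmegaS, Set.mem_prod, Set.mem_Icc] at hp
    obtain ⟨⟨hp1, hp2⟩, hp3, hp4⟩ := hp
    obtain ⟨i, hi1, hi2, hix0, hix1⟩ := hxfind p.1 hp1 hp2
    obtain ⟨j, hj1, hj2, hjy0, hjy1⟩ := exists_sandwich (meshY N ly) (N / 3) (2 * N / 3) p.2
      (by omega) (by rw [hyl]; exact hp3) (by rw [hyr]; exact hp4)
    set G : Set (ℝ × ℝ) := {q | q ∈ UnitSq ∧ q.1 ≤ 1 - lx ∧ ly ≤ q.2 ∧ q.2 ≤ 1 - ly} with hGdef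
    have hGsub : ∀ q ∈ G, |E q| ≤ 2 * C0 * R := fun q hq =>
      hGbd q hq.1 hq.2.1 hq.2.2.1 hq.2.2.2
    have hcorn : ∀ u v : ℕ, u ≤ N / 2 → N / 3 ≤ v → v ≤ 2 * N / 3 →
        (meshX N lx u, meshY N ly v) ∈ G := by
      intro u v hu hv1 hv2
      obtain ⟨hxa, hxb⟩ := hXmem u hu
      obtain ⟨hya, hyb⟩ := hymid v hv1 hv2
      refine ⟨?_, hxb, hya, hyb⟩
      simp only [UnitSq, Set.mem_prod, Set.mem_Icc]
      exact ⟨⟨hxa, by linarith⟩, by linarith, by linarith⟩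
    have hpG : p ∈ G := by
      refine ⟨?_, hp2, hp3, hp4⟩
      simp only [UnitSq, Set.mem_prod, Set.mem_Icc]
      exact ⟨⟨hp1, by linarith⟩, by linarith, by linarith⟩
    exact key E EI hI G hGsub p i j (by omega) (by omega) (by omega) (by omega)
      hix0 hix1 hjy0 hjy1 hpG
      (hcorn (i - 1) (j - 1) (by omega) (by omega) (by omega))
      (hcorn i (j - 1) hi2 (by omega) (by omega))
      (hcorn (i - 1) j (by omega) (by omega) hj2)
      (hcorn i j hi2 (by omega) hj2)
  -- bound on Ω₂ (for E₁)
  have hOmega2 : ∀ (E EI : ℝ × ℝ → ℝ), IsMeshInterpolant N lx ly E EI →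
      (∀ q : ℝ × ℝ, q ∈ UnitSq → q.1 ≤ 1 - lx → |E q| ≤ 2 * C0 * R) →
      ∀ p ∈ Omega2R lx ly, |E p - EI p| ≤ 4 * C0 * R := by
    intro E EI hI hGbd p hp
    simp only [Omega2R, Set.mem_prod, Set.mem_union, Set.mem_Icc] at hp
    obtain ⟨⟨hp1, hp2⟩, hpy⟩ := hp
    have hpy1 : 0 ≤ p.2 := by rcases hpy with ⟨h, _⟩ | ⟨h, _⟩ <;> linarith
    have hpy2 : p.2 ≤ 1 := by rcases hpy with ⟨_, h⟩ | ⟨_, h⟩ <;> linarith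
    obtain ⟨i, hi1, hi2, hix0, hix1⟩ := hxfind p.1 hp1 hp2
    obtain ⟨j, hj1, hj2, hjy0, hjy1⟩ := exists_sandwich (meshY N ly) 0 N p.2
      (by omega) (by rw [hy0]; exact hpy1) (by rw [hyN]; exact hpy2)
    set G : Set (ℝ × ℝ) := {q | q ∈ UnitSq ∧ q.1 ≤ 1 - lx} with hGdef
    have hGsub : ∀ q ∈ G, |E q| ≤ 2 * C0 * R := fun q hq => hGbd q hq.1 hq.2
    have hcorn : ∀ u v : ℕ, u ≤ N / 2 → v ≤ N → (meshX N lx u, meshY N ly v) ∈ G := by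
      intro u v hu hv
      obtain ⟨hxa, hxb⟩ := hXmem u hu
      obtain ⟨hya, hyb⟩ := hymem v hv
      refine ⟨?_, hxb⟩
      simp only [UnitSq, Set.mem_prod, Set.mem_Icc]
      exact ⟨⟨hxa, by linarith⟩, hya, hyb⟩
    have hpG : p ∈ G := by
      refine ⟨?_, hp2⟩
      simp only [UnitSq, Set.mem_prod, Set.mem_Icc]
      exact ⟨⟨hp1, by linarith⟩, hpy1, hpy2⟩
    exact key E EI hI G hGsub p i j (by omega) (by omega) (by omega) hj2
      hix0 hix1 hjy0 hjy1 hpG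
      (hcorn (i - 1) (j - 1) (by omega) (by omega))
      (hcorn i (j - 1) hi2 (by omega))
      (hcorn (i - 1) j (by omega) hj2)
      (hcorn i j hi2 hj2)
  refine ⟨?_, ?_, ?_, ?_⟩
  · exact hOmegaS E1 EI1 hI1 (fun q hq h1 _ _ => hE1pt q hq h1)
  · exact hOmegaS E2 EI2 hI2 (fun q hq _ h2 h3 => hE2pt q hq h2 h3)
  · exact hOmegaS E12 EI12 hI12 (fun q hq h1 _ _ => hE12pt q hq h1)
  · exact hOmega2 E1 EI1 hI1 hE1pt
end
end

section
/- There exists a constant C, independent of ε and N, such that ‖(E_1 − E_1^I)_y‖_{L^∞(Ω_2)} ≤ C N^{-5/2} and ‖(E_12 − E_12^I)_y‖_{L^∞(Ω_2)} ≤ C ε^{-1/2} N^{-5/2}, where the subscript y denotes the partial derivative with respect to y (taken rectangle-by-rectangle for the piecewise bilinear interpolant, i.e. an essential supremum). -/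
open MeasureTheory Real Set

noncomputable section

section Aux

open ContinuousLinearMap in
lemma poly_hasFDerivAt (a b c d : ℝ) (p : ℝ × ℝ) :
    HasFDerivAt (fun q : ℝ × ℝ => a + b * q.1 + c * q.2 + d * (q.1 * q.2))
      ((b + d * p.2) • (fst ℝ ℝ ℝ) + (c + d * p.1) • (snd ℝ ℝ ℝ)) p := by
  have h1 : HasFDerivAt (fun q : ℝ × ℝ => q.1) (fst ℝ ℝ ℝ) p := hasFDerivAt_fst
  have h2 : HasFDerivAt (fun q : ℝ × ℝ => q.2) (snd ℝ ℝ ℝ) p := hasFDerivAt_snd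
  have H := (((hasFDerivAt_const a p).add (h1.const_mul b)).add (h2.const_mul c)).add
    ((h1.mul h2).const_mul d)
  refine H.congr_fderiv ?_
  apply ContinuousLinearMap.ext
  intro q
  simp
  ring

lemma pdy_poly (a b c d : ℝ) (p : ℝ × ℝ) :
    pdy (fun q : ℝ × ℝ => a + b * q.1 + c * q.2 + d * (q.1 * q.2)) p = c + d * p.1 := by
  show fderiv ℝ _ p (0, 1) = _
  rw [(poly_hasFDerivAt a b c d p).fderiv]
  simp

lemma mvt_pdy (E : ℝ × ℝ → ℝ) (hE : ContDiff ℝ 3 E) (x y1 y2 : ℝ) (h : y1 < y2) :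
    ∃ ξ ∈ Ioo y1 y2, pdy E (x, ξ) * (y2 - y1) = E (x, y2) - E (x, y1) := by
  have hd : ∀ t : ℝ, HasDerivAt (fun t => E (x, t)) (pdy E (x, t)) t := by
    intro t
    have h1 : HasFDerivAt E (fderiv ℝ E (x, t)) (x, t) :=
      ((hE.differentiable (by norm_num)) (x, t)).hasFDerivAt
    have h2 : HasDerivAt (fun t : ℝ => ((x, t) : ℝ × ℝ)) ((0 : ℝ), (1 : ℝ)) t :=
      (hasDerivAt_const t x).prodMk (hasDerivAt_id t)
    have := h1.comp_hasDerivAt t h2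
    exact this
  obtain ⟨ξ, hξ, heq⟩ := exists_hasDerivAt_eq_slope (fun t => E (x, t))
    (fun t => pdy E (x, t)) h
    (fun t _ => (hd t).continuousAt.continuousWithinAt) (fun t _ => hd t)
  refine ⟨ξ, hξ, ?_⟩
  rw [heq, div_mul_cancel₀ _ (sub_ne_zero.2 h.ne')]

end Aux

section Mesh

lemma meshX_val (m i : ℕ) (hm : 1 ≤ m) (lx : ℝ) (hlx0 : 0 ≤ lx) (hlx1 : lx ≤ 1)
    (h : i ≤ 3 * m) : meshX (6 * m) lx i ∈ Icc (0 : ℝ) (1 - lx) := by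
  have e : 6 * m / 2 = 3 * m := by omega
  rw [meshX, e, if_pos h]
  have hm' : (1 : ℝ) ≤ (m : ℝ) := by exact_mod_cast hm
  have hi : (i : ℝ) ≤ 3 * m := by exact_mod_cast h
  have hi0 : (0 : ℝ) ≤ (i : ℝ) := Nat.cast_nonneg i
  have hN : (0 : ℝ) < ((6 * m : ℕ) : ℝ) := by push_cast; linarith
  constructor
  · apply div_nonneg _ hN.le
    nlinarith
  · rw [div_le_iff₀ hN]
    push_cast
    nlinarith

lemma meshX_ge (m i : ℕ) (hm : 1 ≤ m) (lx : ℝ) (hlx0 : 0 ≤ lx)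
    (h : 3 * m ≤ i) (hi : i ≤ 6 * m) : 1 - lx ≤ meshX (6 * m) lx i := by
  have e : 6 * m / 2 = 3 * m := by omega
  have hm' : (1 : ℝ) ≤ (m : ℝ) := by exact_mod_cast hm
  have hN : (0 : ℝ) < ((6 * m : ℕ) : ℝ) := by push_cast; linarith
  rw [meshX, e]
  split_ifs with h1
  · have : i = 3 * m := le_antisymm h1 h
    subst this
    have : 2 * ((3 * m : ℕ) : ℝ) * (1 - lx) / ((6 * m : ℕ) : ℝ) = 1 - lx := by
      push_cast
      field_simp
      ring
    rw [this]
  · have hi' : (3 * (m : ℝ)) + 1 ≤ (i : ℝ) := by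
      have : 3 * m + 1 ≤ i := by omega
      exact_mod_cast this
    have hiN : (i : ℝ) ≤ 6 * m := by exact_mod_cast hi
    rw [sub_le_sub_iff_left, div_le_iff₀ hN]
    push_cast
    nlinarith [mul_nonneg hlx0 (by linarith : (0:ℝ) ≤ 2 * (i : ℝ) - 6 * (m:ℝ))]

lemma meshY_mem (m j : ℕ) (hm : 1 ≤ m) (ly : ℝ) (hly0 : 0 ≤ ly) (hly4 : ly ≤ 1 / 4)
    (hj : j ≤ 6 * m) : meshY (6 * m) ly j ∈ Icc (0 : ℝ) 1 := by
  have e1 : 6 * m / 3 = 2 * m := by omega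
  have e2 : 2 * (6 * m) / 3 = 4 * m := by omega
  have hm' : (1 : ℝ) ≤ (m : ℝ) := by exact_mod_cast hm
  have hN : (0 : ℝ) < ((6 * m : ℕ) : ℝ) := by push_cast; linarith
  have hj0 : (0 : ℝ) ≤ (j : ℝ) := Nat.cast_nonneg j
  rw [meshY, e1, e2]
  split_ifs with h1 h2
  · -- j ≤ 2m
    have hj2 : (j : ℝ) ≤ 2 * m := by exact_mod_cast h1
    constructor
    · apply div_nonneg _ hN.le
      positivity
    · rw [div_le_one hN]
      push_cast
      nlinarith
  · -- 2m < j ≤ 4m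
    have hja : 2 * (m : ℝ) + 1 ≤ (j : ℝ) := by
      have : 2 * m + 1 ≤ j := by omega
      exact_mod_cast this
    have hjb : (j : ℝ) ≤ 4 * m := by exact_mod_cast h2
    have key : (3 * (j : ℝ) / ((6 * m : ℕ) : ℝ) - 1) -
        3 * (2 * (j : ℝ) - ((6 * m : ℕ) : ℝ)) * ly / ((6 * m : ℕ) : ℝ) =
        (3 * (j : ℝ) - 6 * m - 3 * (2 * (j : ℝ) - 6 * m) * ly) / (6 * (m : ℝ)) := by
      push_cast
      field_simp
    rw [key]
    have hnum0 : 0 ≤ 3 * (j : ℝ) - 6 * m - 3 * (2 * (j : ℝ) - 6 * m) * ly := by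
      nlinarith [mul_nonneg (by linarith : (0:ℝ) ≤ (j:ℝ) - 2*m - 1) (by linarith : (0:ℝ) ≤ 1/4 - ly),
        mul_nonneg hly0 (by linarith : (0:ℝ) ≤ (m:ℝ) - 1)]
    have hnum1 : 3 * (j : ℝ) - 6 * m - 3 * (2 * (j : ℝ) - 6 * m) * ly ≤ 6 * m := by
      nlinarith [mul_nonneg (by linarith : (0:ℝ) ≤ 4*(m:ℝ) - (j:ℝ)) (by linarith : (0:ℝ) ≤ 1/4 - ly),
        mul_nonneg hly0 (by linarith : (0:ℝ) ≤ (m:ℝ))]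
    constructor
    · positivity
    · rw [div_le_one (by linarith)]
      linarith
  · -- j > 4m
    have hja : 4 * (m : ℝ) + 1 ≤ (j : ℝ) := by
      have : 4 * m + 1 ≤ j := by omega
      exact_mod_cast this
    have hjb : (j : ℝ) ≤ 6 * m := by exact_mod_cast hj
    constructor
    · rw [sub_nonneg, div_le_one hN]
      push_cast
      nlinarith [mul_nonneg (by linarith : (0:ℝ) ≤ 6*(m:ℝ) - (j:ℝ)) (by linarith : (0:ℝ) ≤ 1/4 - ly)]
    · rw [sub_le_self_iff]
      apply div_nonneg _ hN.le
      push_cast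
      nlinarith

end Mesh

lemma core_est (m : ℕ) (hm : 1 ≤ m) (lx ly M : ℝ) (hlx0 : 0 < lx) (hlx2 : lx ≤ 1 / 2)
    (hly0 : 0 < ly) (hly4 : ly ≤ 1 / 4) (E EI : ℝ × ℝ → ℝ) (hE : ContDiff ℝ 3 E)
    (hM : ∀ q ∈ UnitSq, q.1 ≤ 1 - lx → |pdy E q| ≤ M)
    (hI : IsMeshInterpolant (6 * m) lx ly E EI)
    (i j : ℕ) (hi1 : 1 ≤ i) (hiN : i ≤ 6 * m) (hj1 : 1 ≤ j) (hjN : j ≤ 6 * m)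
    (p : ℝ × ℝ) (hp : p ∈ interior (meshRect (6 * m) lx ly i j) ∩ Omega2R lx ly) :
    |pdy (fun q => E q - EI q) p| ≤ 2 * M := by
  obtain ⟨hpi, hpΩ⟩ := hp
  obtain ⟨i', rfl⟩ : ∃ i', i = i' + 1 := ⟨i - 1, by omega⟩
  obtain ⟨j', rfl⟩ : ∃ j', j = j' + 1 := ⟨j - 1, by omega⟩
  set X0 := meshX (6 * m) lx i' with hX0def
  set X1 := meshX (6 * m) lx (i' + 1) with hX1def
  set Y0 := meshY (6 * m) ly j' with hY0def
  set Y1 := meshY (6 * m) ly (j' + 1) with hY1def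
  have hrect : meshRect (6 * m) lx ly (i' + 1) (j' + 1) = Icc X0 X1 ×ˢ Icc Y0 Y1 := by
    simp [meshRect, -Set.Icc_prod_Icc]
    rfl
  have hpi' : p.1 ∈ Ioo X0 X1 ∧ p.2 ∈ Ioo Y0 Y1 := by
    rw [hrect, interior_prod_eq, interior_Icc, interior_Icc] at hpi
    exact hpi
  obtain ⟨hx, hy⟩ := hpi'
  have hΩx : p.1 ∈ Icc 0 (1 - lx) := hpΩ.1
  have hΩy : p.2 ∈ Icc 0 ly ∪ Icc (1 - ly) 1 := hpΩ.2
  have hpU : p ∈ UnitSq := by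
    refine ⟨⟨hΩx.1, hΩx.2.trans (by linarith)⟩, ?_⟩
    rcases hΩy with h | h
    · exact ⟨h.1, h.2.trans (by linarith)⟩
    · exact ⟨le_trans (by linarith) h.1, h.2⟩
  -- the rectangle lies left of the x-layer
  have hi3 : i' + 1 ≤ 3 * m := by
    by_contra h
    have h3 : 3 * m ≤ i' := by omega
    have h4 := meshX_ge m i' hm lx hlx0.le h3 (by omega)
    have h5 := hx.1
    have h6 := hΩx.2
    rw [← hX0def] at h4
    linarith
  have hX0m : X0 ∈ Icc (0 : ℝ) (1 - lx) :=
    meshX_val m i' hm lx hlx0.le (by linarith) (by omega)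
  have hX1m : X1 ∈ Icc (0 : ℝ) (1 - lx) :=
    meshX_val m (i' + 1) hm lx hlx0.le (by linarith) hi3
  have hY0m : Y0 ∈ Icc (0 : ℝ) 1 := meshY_mem m j' hm ly hly0.le hly4 (by omega)
  have hY1m : Y1 ∈ Icc (0 : ℝ) 1 := meshY_mem m (j' + 1) hm ly hly0.le hly4 (by omega)
  have hX01 : X0 < X1 := lt_trans hx.1 hx.2
  have hY01 : Y0 < Y1 := lt_trans hy.1 hy.2
  -- the bilinear representation of EI on the rectangle
  obtain ⟨a, b, c, d, hpoly⟩ :=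
    hI.2.1 (i' + 1) (j' + 1) (by omega) (by omega) (by omega) (by omega)
  rw [hrect] at hpoly
  -- bound the slope c + d x at any node abscissa
  have bound : ∀ x : ℝ, x ∈ Icc (0 : ℝ) (1 - lx) → x ∈ Icc X0 X1 →
      EI (x, Y0) = E (x, Y0) → EI (x, Y1) = E (x, Y1) → |c + d * x| ≤ M := by
    intro x hx01 hxI h0 h1
    obtain ⟨ξ, hξ, hslope⟩ := mvt_pdy E hE x Y0 Y1 hY01
    have e0 : E (x, Y0) = a + b * x + c * Y0 + d * (x * Y0) := by
      rw [← h0]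
      exact hpoly (x, Y0) ⟨hxI, le_refl _, hY01.le⟩
    have e1 : E (x, Y1) = a + b * x + c * Y1 + d * (x * Y1) := by
      rw [← h1]
      exact hpoly (x, Y1) ⟨hxI, hY01.le, le_refl _⟩
    have heq2 : pdy E (x, ξ) * (Y1 - Y0) = (c + d * x) * (Y1 - Y0) := by
      rw [hslope, e1, e0]; ring
    have hcd : c + d * x = pdy E (x, ξ) :=
      (mul_right_cancel₀ (sub_ne_zero.2 hY01.ne') heq2).symm
    rw [hcd]
    exact hM (x, ξ) ⟨⟨hx01.1, hx01.2.trans (by linarith)⟩,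
      ⟨le_trans hY0m.1 hξ.1.le, le_trans hξ.2.le hY1m.2⟩⟩ hx01.2
  have hB0 : |c + d * X0| ≤ M :=
    bound X0 hX0m ⟨le_refl _, hX01.le⟩
      (hI.2.2 i' j' (by omega) (by omega)) (hI.2.2 i' (j' + 1) (by omega) (by omega))
  have hB1 : |c + d * X1| ≤ M :=
    bound X1 hX1m ⟨hX01.le, le_refl _⟩
      (hI.2.2 (i' + 1) j' (by omega) (by omega)) (hI.2.2 (i' + 1) (j' + 1) (by omega) (by omega))
  -- EI agrees with a polynomial near p
  have hnhds : meshRect (6 * m) lx ly (i' + 1) (j' + 1) ∈ nhds p :=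
    mem_interior_iff_mem_nhds.1 hpi
  rw [hrect] at hnhds
  have hEq : EI =ᶠ[nhds p] (fun q : ℝ × ℝ => a + b * q.1 + c * q.2 + d * (q.1 * q.2)) :=
    Filter.eventuallyEq_of_mem hnhds hpoly
  have hdiffP : DifferentiableAt ℝ
      (fun q : ℝ × ℝ => a + b * q.1 + c * q.2 + d * (q.1 * q.2)) p :=
    (poly_hasFDerivAt a b c d p).differentiableAt
  have hdiffEI : DifferentiableAt ℝ EI p := hEq.differentiableAt_iff.2 hdiffP
  have hpdyEI : pdy EI p = c + d * p.1 := by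
    show fderiv ℝ EI p (0, 1) = _
    rw [hEq.fderiv_eq]
    exact pdy_poly a b c d p
  have hdiffE : DifferentiableAt ℝ E p := (hE.differentiable (by norm_num)) p
  have hsub : pdy (fun q => E q - EI q) p = pdy E p - pdy EI p := by
    show fderiv ℝ (fun q => E q - EI q) p (0, 1) = _
    rw [fderiv_fun_sub hdiffE hdiffEI]
    rfl
  rw [hsub]
  have h1 : |pdy E p| ≤ M := hM p hpU hΩx.2
  have h2 : |pdy EI p| ≤ M := by
    rw [hpdyEI, abs_le]
    rw [abs_le] at hB0 hB1
    constructor <;> rcases le_total 0 d with hd | hd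
    · nlinarith [mul_le_mul_of_nonneg_left hx.1.le hd]
    · nlinarith [mul_le_mul_of_nonpos_left hx.2.le hd]
    · nlinarith [mul_le_mul_of_nonneg_left hx.2.le hd]
    · nlinarith [mul_le_mul_of_nonpos_left hx.1.le hd]
  calc |pdy E p - pdy EI p| ≤ |pdy E p| + |pdy EI p| := abs_sub _ _
    _ ≤ 2 * M := by linarith

/-- `‖(E₁ − E₁^I)_y‖_{L^∞(Ω₂)} ≤ C N^{-5/2}` and
`‖(E₁₂ − E₁₂^I)_y‖_{L^∞(Ω₂)} ≤ C ε^{-1/2} N^{-5/2}` (derivatives of the piecewise bilinear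
interpolants are taken rectangle-by-rectangle, i.e. on the interiors of mesh rectangles). -/
theorem layer_interpolation_y_deriv (β C0 : ℝ) (hβ : 0 < β) (hC0 : 0 < C0) :
    ∃ C : ℝ, 0 < C ∧
      ∀ (N : ℕ) (ε lx ly : ℝ) (E1 E12 EI1 EI12 : ℝ × ℝ → ℝ),
        ShishkinHyp N ε β lx ly →
        BoundE1 ε β C0 E1 → BoundE12 ε β C0 E12 →
        IsMeshInterpolant N lx ly E1 EI1 →
        IsMeshInterpolant N lx ly E12 EI12 →
        (∀ i j : ℕ, 1 ≤ i → i ≤ N → 1 ≤ j → j ≤ N →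
          ∀ p ∈ interior (meshRect N lx ly i j) ∩ Omega2R lx ly,
            |pdy (fun q => E1 q - EI1 q) p| ≤ C * (N : ℝ) ^ (-(5 / 2 : ℝ))) ∧
        (∀ i j : ℕ, 1 ≤ i → i ≤ N → 1 ≤ j → j ≤ N →
          ∀ p ∈ interior (meshRect N lx ly i j) ∩ Omega2R lx ly,
            |pdy (fun q => E12 q - EI12 q) p|
              ≤ C * ε ^ (-(1 / 2 : ℝ)) * (N : ℝ) ^ (-(5 / 2 : ℝ))) := by
  refine ⟨4 * C0, by positivity, ?_⟩
  intro N ε lx ly E1 E12 EI1 EI12 hS hE1 hE12 hI1 hI12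
  obtain ⟨hN0, hdvd, hε0, hεN, hβ0, hlxe, hlye, hlx2, hly4⟩ := hS
  obtain ⟨m, rfl⟩ := hdvd
  have hm : 1 ≤ m := by omega
  have hm' : (1 : ℝ) ≤ (m : ℝ) := by exact_mod_cast hm
  have hNr1 : (1 : ℝ) < ((6 * m : ℕ) : ℝ) := by push_cast; linarith
  have hNr0 : (0 : ℝ) < ((6 * m : ℕ) : ℝ) := by linarith
  have hlog : 0 < Real.log ((6 * m : ℕ) : ℝ) := Real.log_pos hNr1
  have hlx0 : 0 < lx := by
    rw [hlxe]
    exact mul_pos (div_pos (mul_pos (by norm_num) hε0) hβ0) hlog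
  have hly0 : 0 < ly := by
    rw [hlye]
    exact mul_pos (mul_pos (by norm_num) (Real.sqrt_pos.2 hε0)) hlog
  have hexp : ∀ x : ℝ, x ≤ 1 - lx →
      Real.exp (-β * (1 - x) / ε) ≤ ((6 * m : ℕ) : ℝ) ^ (-(5 / 2 : ℝ)) := by
    intro x hx
    rw [Real.rpow_def_of_pos hNr0]
    apply Real.exp_le_exp.2
    have hβlx : β * lx = 2.5 * ε * Real.log ((6 * m : ℕ) : ℝ) := by
      rw [hlxe]; field_simp
    have h1 : β * lx ≤ β * (1 - x) := mul_le_mul_of_nonneg_left (by linarith) hβ0.le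
    rw [div_le_iff₀ hε0]
    norm_num at hβlx ⊢
    nlinarith
  have hrpow0 : (0 : ℝ) ≤ ((6 * m : ℕ) : ℝ) ^ (-(5 / 2 : ℝ)) :=
    Real.rpow_nonneg hNr0.le _
  have hεrpow0 : (0 : ℝ) ≤ ε ^ (-(1 / 2 : ℝ)) := Real.rpow_nonneg hε0.le _
  constructor
  · -- E1 part
    have hM1 : ∀ q ∈ UnitSq, q.1 ≤ 1 - lx →
        |pdy E1 q| ≤ C0 * ((6 * m : ℕ) : ℝ) ^ (-(5 / 2 : ℝ)) := by
      intro q hq hq1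
      have hb := hE1.2 0 1 (by norm_num) q hq
      simp only [pd, Function.iterate_one, Function.iterate_zero_apply, Nat.cast_zero,
        neg_zero, Real.rpow_zero, mul_one] at hb
      exact hb.trans (mul_le_mul_of_nonneg_left (hexp q.1 hq1) hC0.le)
    intro i j hi1 hiN hj1 hjN p hp
    have h := core_est m hm lx ly _ hlx0 hlx2 hly0 hly4 E1 EI1 hE1.1 hM1 hI1
      i j hi1 hiN hj1 hjN p hp
    nlinarith [mul_nonneg hC0.le hrpow0]
  · -- E12 part
    have hM12 : ∀ q ∈ UnitSq, q.1 ≤ 1 - lx →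
        |pdy E12 q| ≤ 2 * C0 * ε ^ (-(1 / 2 : ℝ)) * ((6 * m : ℕ) : ℝ) ^ (-(5 / 2 : ℝ)) := by
      intro q hq hq1
      have hb := hE12.2 0 1 (by norm_num) q hq
      simp only [pd, Function.iterate_one, Function.iterate_zero_apply, Nat.cast_zero,
        Nat.cast_one, zero_add] at hb
      have hsum : Real.exp (-q.2 / Real.sqrt ε) + Real.exp (-(1 - q.2) / Real.sqrt ε) ≤ 2 := by
        have hs : 0 < Real.sqrt ε := Real.sqrt_pos.2 hε0
        have h1 : Real.exp (-q.2 / Real.sqrt ε) ≤ 1 :=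
          Real.exp_le_one_iff.2 (div_nonpos_of_nonpos_of_nonneg (by linarith [hq.2.1]) hs.le)
        have h2 : Real.exp (-(1 - q.2) / Real.sqrt ε) ≤ 1 :=
          Real.exp_le_one_iff.2 (div_nonpos_of_nonpos_of_nonneg (by linarith [hq.2.2]) hs.le)
        linarith
      have hfac : (0 : ℝ) ≤ C0 * ε ^ (-(1 / 2 : ℝ)) := mul_nonneg hC0.le hεrpow0
      calc |pdy E12 q|
          ≤ C0 * ε ^ (-(1 / 2 : ℝ)) * Real.exp (-β * (1 - q.1) / ε) *
            (Real.exp (-q.2 / Real.sqrt ε) + Real.exp (-(1 - q.2) / Real.sqrt ε)) := hb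
        _ ≤ C0 * ε ^ (-(1 / 2 : ℝ)) * ((6 * m : ℕ) : ℝ) ^ (-(5 / 2 : ℝ)) * 2 := by
            apply mul_le_mul (mul_le_mul_of_nonneg_left (hexp q.1 hq1) hfac) hsum
              (by positivity) (mul_nonneg hfac hrpow0)
        _ = 2 * C0 * ε ^ (-(1 / 2 : ℝ)) * ((6 * m : ℕ) : ℝ) ^ (-(5 / 2 : ℝ)) := by ring
    intro i j hi1 hiN hj1 hjN p hp
    have h := core_est m hm lx ly _ hlx0 hlx2 hly0 hly4 E12 EI12 hE12.1 hM12 hI12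
      i j hi1 hiN hj1 hjN p hp
    calc |pdy (fun q => E12 q - EI12 q) p|
        ≤ 2 * (2 * C0 * ε ^ (-(1 / 2 : ℝ)) * ((6 * m : ℕ) : ℝ) ^ (-(5 / 2 : ℝ))) := h
      _ = 4 * C0 * ε ^ (-(1 / 2 : ℝ)) * ((6 * m : ℕ) : ℝ) ^ (-(5 / 2 : ℝ)) := by ring
end
end

section
/- There exists a constant C, independent of ε and N, such that ‖(E_12)_x‖_{L^1(Ω_2)} ≤ C ε^{1/2} N^{-5/2} and ‖(E_12^I)_x‖_{L^1(Ω_2)} ≤ C ε^{1/2} N^{-5/2}, where the subscript x denotes the partial derivative with respect to x (taken rectangle-by-rectangle for the piecewise bilinear interpolant). -/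
open MeasureTheory Real Set

noncomputable section

namespace CornerAux

lemma cover_Icc (a : ℕ → ℝ) (m : ℕ) : ∀ n : ℕ,
    Icc (a m) (a (m + n + 1)) ⊆ ⋃ k ∈ Finset.Ico m (m + n + 1), Icc (a k) (a (k + 1)) := by
  intro n
  induction n with
  | zero =>
    intro x hx
    simp only [Finset.mem_Ico, Set.mem_iUnion]
    exact ⟨m, ⟨le_refl m, by omega⟩, by simpa using hx⟩
  | succ n ih =>
    have h1 : Icc (a m) (a (m + (n+1) + 1)) ⊆
        Icc (a m) (a (m + n + 1)) ∪ Icc (a (m + n + 1)) (a (m + (n+1) + 1)) :=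
      Set.Icc_subset_Icc_union_Icc (a := a m) (b := a (m + n + 1)) (c := a (m + (n+1)+1))
    intro x hx
    rcases h1 hx with h | h
    · rcases Set.mem_iUnion₂.1 (ih h) with ⟨k, hk, hxk⟩
      exact Set.mem_iUnion₂.2 ⟨k, by simp only [Finset.mem_Ico] at hk ⊢; omega, hxk⟩
    · exact Set.mem_iUnion₂.2
        ⟨m + n + 1, by simp only [Finset.mem_Ico]; omega, by convert h using 3 <;> omega⟩

lemma lint_biUnion_le {ι : Type*} (f : ℝ × ℝ → ENNReal) (s : Finset ι) (t : ι → Set (ℝ × ℝ)) :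
    ∫⁻ p in ⋃ b ∈ s, t b, f p ≤ ∑ b ∈ s, ∫⁻ p in t b, f p := by
  classical
  induction s using Finset.induction_on with
  | empty => simp
  | insert a s' h ih =>
    rw [Finset.set_biUnion_insert, Finset.sum_insert h]
    exact le_trans (lintegral_union_le _ _ _) (add_le_add le_rfl ih)

lemma exp_neg_le_inv {t : ℝ} (ht : 0 < t) : Real.exp (-t) ≤ 1 / t := by
  rw [Real.exp_neg, one_div]
  exact inv_anti₀ ht (by linarith [Real.add_one_le_exp t])

lemma geom_sum_le_inv {r : ℝ} (h0 : 0 ≤ r) (h1 : r < 1) (M : ℕ) :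
    ∑ i ∈ Finset.range M, r ^ i ≤ 1 / (1 - r) := by
  have h := geom_sum_mul r M
  have hr : 0 < 1 - r := by linarith
  rw [le_div_iff₀ hr]
  nlinarith [pow_nonneg h0 M]

lemma step_sum {s k : ℝ} (hs : 0 < s) (hk : 0 < k) (M : ℕ) :
    ∑ m ∈ Finset.range M, k * Real.exp (-((m : ℝ) * k) / s) ≤ k + s := by
  have hterm : ∀ m : ℕ, k * Real.exp (-((m : ℝ) * k) / s) = k * (Real.exp (-(k/s))) ^ m := by
    intro m
    rw [← Real.exp_nat_mul]
    congr 2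
    field_simp
  simp only [hterm]
  rw [← Finset.mul_sum]
  have hr0 : (0:ℝ) ≤ Real.exp (-(k/s)) := (Real.exp_pos _).le
  have hr1 : Real.exp (-(k/s)) < 1 := by
    rw [Real.exp_lt_one_iff]
    have : 0 < k / s := div_pos hk hs
    linarith
  have hsum := geom_sum_le_inv hr0 hr1 M
  have hks : 0 < 1 - Real.exp (-(k/s)) := by linarith
  have h4 : (k + s) * Real.exp (-(k/s)) ≤ s := by
    have h2 : k / s + 1 ≤ Real.exp (k / s) := by
      have := Real.add_one_le_exp (k / s); linarith
    have h3 : (k / s + 1) * Real.exp (-(k/s)) ≤ 1 := by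
      rw [Real.exp_neg, mul_inv_le_iff₀ (Real.exp_pos _)]
      linarith
    have h5 := mul_le_mul_of_nonneg_left h3 hs.le
    have hs' : s ≠ 0 := ne_of_gt hs
    calc (k + s) * Real.exp (-(k/s)) = s * ((k/s + 1) * Real.exp (-(k/s))) := by
          field_simp
      _ ≤ s * 1 := h5
      _ = s := mul_one s
  have hkey : k * (1 / (1 - Real.exp (-(k/s)))) ≤ k + s := by
    rw [mul_one_div, div_le_iff₀ hks]
    nlinarith
  exact le_trans (mul_le_mul_of_nonneg_left hsum hk.le) hkey

lemma integral_exp_linear (c q a b : ℝ) (hc : c ≠ 0) :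
    ∫ t in a..b, Real.exp (c * t + q) = (Real.exp (c * b + q) - Real.exp (c * a + q)) / c := by
  have hF : ∀ t : ℝ, HasDerivAt (fun t => Real.exp (c * t + q) / c) (Real.exp (c * t + q)) t := by
    intro t
    have h1 : HasDerivAt (fun t : ℝ => c * t + q) c t := by
      simpa using ((hasDerivAt_id t).const_mul c).add_const q
    have h3 := h1.exp.div_const c
    rw [mul_div_cancel_right₀ _ hc] at h3
    exact h3
  rw [intervalIntegral.integral_eq_sub_of_hasDerivAt (fun t _ => hF t)
    ((Real.continuous_exp.comp (by continuity)).intervalIntegrable a b)]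
  ring

lemma integral_exp_layer {β ε : ℝ} (hβ : 0 < β) (hε : 0 < ε) (a b : ℝ) :
    ∫ t in a..b, Real.exp (-β * (1 - t) / ε)
      = ε / β * (Real.exp (-β * (1 - b) / ε) - Real.exp (-β * (1 - a) / ε)) := by
  have e1 : ∀ t : ℝ, -β * (1 - t) / ε = β / ε * t + (- (β / ε)) := by
    intro t; field_simp; ring
  simp only [e1]
  rw [integral_exp_linear _ _ _ _ (by positivity)]
  field_simp

lemma integral_exp_layer_y {s : ℝ} (hs : 0 < s) (a b : ℝ) :
    ∫ t in a..b, Real.exp (-t / s) = s * (Real.exp (-a / s) - Real.exp (-b / s)) := by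
  have e1 : ∀ t : ℝ, -t / s = (-(1/s)) * t + (0:ℝ) := by
    intro t; field_simp; ring
  simp only [e1]
  rw [integral_exp_linear _ _ _ _ (by simp; positivity)]
  field_simp
  ring

lemma integral_exp_layer_y' {s : ℝ} (hs : 0 < s) (a b : ℝ) :
    ∫ t in a..b, Real.exp (-(1 - t) / s)
      = s * (Real.exp (-(1 - b) / s) - Real.exp (-(1 - a) / s)) := by
  have e1 : ∀ t : ℝ, -(1 - t) / s = (1/s) * t + (-(1/s)) := by
    intro t; field_simp; ring
  simp only [e1]
  rw [integral_exp_linear _ _ _ _ (by positivity)]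
  field_simp

lemma slice_hasDerivAt {E : ℝ × ℝ → ℝ} (hE : ContDiff ℝ 3 E) (y t : ℝ) :
    HasDerivAt (fun t => E (t, y)) (pdx E (t, y)) t := by
  have hD : DifferentiableAt ℝ E (t, y) := (hE.differentiable (by norm_num)).differentiableAt
  have hline : HasDerivAt (fun t : ℝ => (t, y)) ((1 : ℝ), (0 : ℝ)) t :=
    (hasDerivAt_id t).prodMk (hasDerivAt_const t y)
  exact hD.hasFDerivAt.comp_hasDerivAt t hline

lemma pdx_continuous {E : ℝ × ℝ → ℝ} (hE : ContDiff ℝ 3 E) : Continuous (pdx E) :=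
  (hE.continuous_fderiv (by norm_num)).clm_apply continuous_const

lemma pdx_bilinear (a b c d : ℝ) (p : ℝ × ℝ) :
    pdx (fun q : ℝ × ℝ => a + b * q.1 + c * q.2 + d * (q.1 * q.2)) p = b + d * p.2 := by
  have h1 : HasFDerivAt (fun q : ℝ × ℝ => q.1) (ContinuousLinearMap.fst ℝ ℝ ℝ) p := hasFDerivAt_fst
  have h2 : HasFDerivAt (fun q : ℝ × ℝ => q.2) (ContinuousLinearMap.snd ℝ ℝ ℝ) p := hasFDerivAt_snd
  have h : HasFDerivAt (fun q : ℝ × ℝ => a + b * q.1 + c * q.2 + d * (q.1 * q.2))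
      (((0 : ℝ × ℝ →L[ℝ] ℝ) + b • ContinuousLinearMap.fst ℝ ℝ ℝ
        + c • ContinuousLinearMap.snd ℝ ℝ ℝ)
        + d • (p.1 • ContinuousLinearMap.snd ℝ ℝ ℝ + p.2 • ContinuousLinearMap.fst ℝ ℝ ℝ)) p :=
    (((hasFDerivAt_const a p).add (h1.const_mul b)).add (h2.const_mul c)).add
      ((h1.mul h2).const_mul d)
  rw [pdx, h.fderiv]
  simp

lemma meshX_eq {N : ℕ} {lx : ℝ} {i : ℕ} (hi : i ≤ N / 2) :
    meshX N lx i = (i : ℝ) * (2 * (1 - lx) / (N : ℝ)) := by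
  rw [meshX, if_pos hi]; ring

lemma meshX_zero {N : ℕ} {lx : ℝ} : meshX N lx 0 = 0 := by simp [meshX]

lemma meshX_half {N : ℕ} {lx : ℝ} (h6 : 6 ∣ N) (hN : 0 < N) : meshX N lx (N / 2) = 1 - lx := by
  obtain ⟨m, rfl⟩ := h6
  have hm : 0 < m := by omega
  have h2 : 6 * m / 2 = 3 * m := by omega
  rw [meshX, if_pos le_rfl, h2]
  push_cast
  field_simp
  ring

lemma meshY_bot {N : ℕ} {ly : ℝ} {j : ℕ} (hj : j ≤ N / 3) :
    meshY N ly j = (j : ℝ) * (3 * ly / (N : ℝ)) := by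
  rw [meshY, if_pos hj]; ring

lemma meshY_top {N : ℕ} {ly : ℝ} {j : ℕ} (h6 : 6 ∣ N) (hN : 0 < N)
    (hj : 2 * N / 3 ≤ j) (hj' : j ≤ N) :
    meshY N ly j = 1 - ((N : ℝ) - (j : ℝ)) * (3 * ly / (N : ℝ)) := by
  obtain ⟨m, rfl⟩ := h6
  have hm : 0 < m := by omega
  have h3 : 6 * m / 3 = 2 * m := by omega
  have h23 : 2 * (6 * m) / 3 = 4 * m := by omega
  rw [meshY, h3, h23]
  rw [if_neg (by omega)]
  rcases eq_or_lt_of_le hj with heq | hlt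
  · rw [h23] at heq
    rw [if_pos (by omega)]
    subst heq
    push_cast
    field_simp
    ring
  · rw [if_neg (by omega)]
    ring

lemma meshY_zero {N : ℕ} {ly : ℝ} : meshY N ly 0 = 0 := by simp [meshY]

lemma meshY_last {N : ℕ} {ly : ℝ} (h6 : 6 ∣ N) (hN : 0 < N) : meshY N ly N = 1 := by
  obtain ⟨m, rfl⟩ := h6
  have hm : 0 < m := by omega
  rw [meshY, if_neg (by omega), if_neg (by omega)]
  simp

lemma meshY_third {N : ℕ} {ly : ℝ} (h6 : 6 ∣ N) (hN : 0 < N) : meshY N ly (N / 3) = ly := by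
  obtain ⟨m, rfl⟩ := h6
  have hm : 0 < m := by omega
  have h3 : 6 * m / 3 = 2 * m := by omega
  rw [meshY, if_pos le_rfl, h3]
  push_cast
  field_simp
  ring

lemma meshY_twothird {N : ℕ} {ly : ℝ} (h6 : 6 ∣ N) (hN : 0 < N) :
    meshY N ly (2 * N / 3) = 1 - ly := by
  have h := meshY_top (N := N) (ly := ly) h6 hN le_rfl (by
    obtain ⟨m, rfl⟩ := h6; omega)
  rw [h]
  obtain ⟨m, rfl⟩ := h6
  have hm : 0 < m := by omega
  have h23 : 2 * (6 * m) / 3 = 4 * m := by omega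
  rw [h23]
  push_cast
  field_simp
  ring

lemma pd_one_zero (f : ℝ × ℝ → ℝ) : pd 1 0 f = pdx f := by
  simp [pd]

end CornerAux

set_option maxHeartbeats 1000000 in
/-- `‖(E₁₂)_x‖_{L^1(Ω₂)} ≤ C ε^{1/2} N^{-5/2}` and `‖(E₁₂^I)_x‖_{L^1(Ω₂)} ≤ C ε^{1/2} N^{-5/2}`. -/
theorem corner_layer_x_deriv_L1 (β C0 : ℝ) (hβ : 0 < β) (hC0 : 0 < C0) :
    ∃ C : ℝ, 0 < C ∧
      ∀ (N : ℕ) (ε lx ly : ℝ) (E12 EI12 : ℝ × ℝ → ℝ),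
        ShishkinHyp N ε β lx ly →
        BoundE12 ε β C0 E12 →
        IsMeshInterpolant N lx ly E12 EI12 →
        (∫ p in Omega2R lx ly, |pdx E12 p|
          ≤ C * ε ^ ((1 : ℝ) / 2) * (N : ℝ) ^ (-(5 / 2 : ℝ))) ∧
        (∫ p in Omega2R lx ly, |pdx EI12 p|
          ≤ C * ε ^ ((1 : ℝ) / 2) * (N : ℝ) ^ (-(5 / 2 : ℝ))) := by
  classical
  refine ⟨32 * C0 / β, by positivity, ?_⟩
  intro N ε lx ly E12 EI12 hS hB hI
  obtain ⟨hN0, hN6, hε, hεN, hβ', hlx, hly, hlx2, hly4⟩ := hS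
  obtain ⟨hE3, hEb⟩ := hB
  have hN6' : 6 ≤ N := Nat.le_of_dvd hN0 hN6
  have hN1 : (1:ℝ) < (N:ℝ) := by exact_mod_cast (by omega : 1 < N)
  have hNpos : (0:ℝ) < (N:ℝ) := by linarith
  have hlog : 0 < Real.log (N:ℝ) := Real.log_pos hN1
  have hsε : 0 < Real.sqrt ε := Real.sqrt_pos.2 hε
  have hlxpos : 0 < lx := by rw [hlx]; positivity
  have hlypos : 0 < ly := by rw [hly]; positivity
  set s : ℝ := Real.sqrt ε with hs_def
  have hNx : Real.exp (-β * lx / ε) = (N:ℝ) ^ (-(5/2 : ℝ)) := by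
    rw [Real.rpow_def_of_pos hNpos]
    congr 1
    rw [hlx]
    have hε' : ε ≠ 0 := ne_of_gt hε
    have hβ'' : β ≠ 0 := ne_of_gt hβ
    field_simp
    ring
  have hsub : Omega2R lx ly ⊆ UnitSq := by
    rintro ⟨x, y⟩ ⟨hx, hy⟩
    refine ⟨⟨hx.1, le_trans hx.2 (by linarith)⟩, ?_⟩
    rcases hy with h | h
    · exact ⟨h.1, le_trans h.2 (by linarith)⟩
    · exact ⟨by linarith [h.1], h.2⟩
  have hpdE : ∀ p ∈ UnitSq, |pdx E12 p| ≤
      (C0 * ε⁻¹ * Real.exp (-β * (1 - p.1) / ε)) *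
        (Real.exp (-p.2 / s) + Real.exp (-(1 - p.2) / s)) := by
    intro p hp
    have h1 := hEb 1 0 (by norm_num) p hp
    rw [CornerAux.pd_one_zero] at h1
    have h2 : ε ^ (-(((1:ℕ) : ℝ) + ((0:ℕ) : ℝ) / 2)) = ε⁻¹ := by
      norm_num [Real.rpow_neg_one]
    rw [h2] at h1
    calc |pdx E12 p| ≤ C0 * ε⁻¹ * Real.exp (-β * (1 - p.1) / ε) *
        (Real.exp (-p.2 / s) + Real.exp (-(1 - p.2) / s)) := h1
      _ = _ := by ring
  have hmeasΩ : MeasurableSet (Omega2R lx ly) :=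
    measurableSet_Icc.prod (measurableSet_Icc.union measurableSet_Icc)
  have hcomp : IsCompact (Omega2R lx ly) :=
    isCompact_Icc.prod (isCompact_Icc.union isCompact_Icc)
  -- the x- and y- factor functions
  set g1 : ℝ → ℝ := fun x => C0 * ε⁻¹ * Real.exp (-β * (1 - x) / ε) with hg1_def
  set g2 : ℝ → ℝ := fun y => Real.exp (-y / s) + Real.exp (-(1 - y) / s) with hg2_def
  have hg1c : Continuous g1 := by
    apply Continuous.mul continuous_const
    exact Real.continuous_exp.comp (by fun_prop)
  have hg2c : Continuous g2 := by
    apply Continuous.add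
    · exact Real.continuous_exp.comp (by fun_prop)
    · exact Real.continuous_exp.comp (by fun_prop)
  have hg2nn : ∀ y : ℝ, 0 ≤ g2 y := fun y => by positivity
  have hg1nn : ∀ x : ℝ, 0 ≤ g1 x := fun x => by positivity
  -- x integral bound
  have hx1 : ∫ x in Icc (0:ℝ) (1 - lx), g1 x ≤ C0 * ε⁻¹ * (ε / β * (N:ℝ) ^ (-(5/2 : ℝ))) := by
    rw [integral_Icc_eq_integral_Ioc,
      ← intervalIntegral.integral_of_le (by linarith : (0:ℝ) ≤ 1 - lx)]
    rw [hg1_def]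
    simp only []
    rw [intervalIntegral.integral_const_mul, CornerAux.integral_exp_layer hβ hε]
    have e1 : -β * (1 - (1 - lx)) / ε = -β * lx / ε := by ring
    rw [e1, hNx]
    have h3 : (0:ℝ) < Real.exp (-β * (1 - 0) / ε) := Real.exp_pos _
    have h4 : (0:ℝ) ≤ C0 * ε⁻¹ := by positivity
    have h5 : ε / β * ((N:ℝ) ^ (-(5/2:ℝ)) - Real.exp (-β * (1 - 0)/ε)) ≤
        ε / β * (N:ℝ) ^ (-(5/2:ℝ)) := by
      have h6 : (0:ℝ) ≤ ε / β := by positivity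
      exact mul_le_mul_of_nonneg_left (sub_le_self _ h3.le) h6
    exact mul_le_mul_of_nonneg_left h5 h4
  have hx0 : 0 ≤ ∫ x in Icc (0:ℝ) (1 - lx), g1 x :=
    setIntegral_nonneg measurableSet_Icc (fun x _ => hg1nn x)
  -- y integral bound
  have hy1 : ∫ y in (Icc (0:ℝ) ly ∪ Icc (1 - ly) 1), g2 y ≤ 2 * s := by
    have hsubY : (Icc (0:ℝ) ly ∪ Icc (1 - ly) 1) ⊆ Icc (0:ℝ) 1 := by
      intro y hy
      rcases hy with h | h
      · exact ⟨h.1, by linarith [h.2]⟩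
      · exact ⟨by linarith [h.1], h.2⟩
    have hint01 : IntegrableOn g2 (Icc (0:ℝ) 1) :=
      hg2c.continuousOn.integrableOn_compact isCompact_Icc
    have step1 : ∫ y in (Icc (0:ℝ) ly ∪ Icc (1 - ly) 1), g2 y ≤ ∫ y in Icc (0:ℝ) 1, g2 y := by
      apply setIntegral_mono_set hint01
      · exact Filter.Eventually.of_forall (fun y => hg2nn y)
      · exact HasSubset.Subset.eventuallyLE hsubY
    refine le_trans step1 ?_
    rw [integral_Icc_eq_integral_Ioc,
      ← intervalIntegral.integral_of_le (by norm_num : (0:ℝ) ≤ 1)]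
    rw [hg2_def]
    simp only []
    rw [intervalIntegral.integral_add
      (Continuous.intervalIntegrable (by fun_prop : Continuous fun y : ℝ => Real.exp (-y / s)) _ _)
      (Continuous.intervalIntegrable (by fun_prop : Continuous fun y : ℝ => Real.exp (-(1 - y) / s)) _ _)]
    rw [CornerAux.integral_exp_layer_y hsε, CornerAux.integral_exp_layer_y' hsε]
    have e0 : -(0:ℝ)/s = 0 := by ring
    have e2 : -(1 - (1:ℝ))/s = 0 := by ring
    rw [e0, e2]
    simp only [Real.exp_zero]
    have h6 : 0 < Real.exp (-(1:ℝ)/s) := Real.exp_pos _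
    have h7 : 0 < Real.exp (-(1 - (0:ℝ))/s) := Real.exp_pos _
    nlinarith
  have hy0 : 0 ≤ ∫ y in (Icc (0:ℝ) ly ∪ Icc (1 - ly) 1), g2 y :=
    setIntegral_nonneg (measurableSet_Icc.union measurableSet_Icc) (fun y _ => hg2nn y)
  constructor
  · -- part 1
    have hfint : IntegrableOn (fun p => |pdx E12 p|) (Omega2R lx ly) :=
      ((CornerAux.pdx_continuous hE3).abs).continuousOn.integrableOn_compact hcomp
    have hGc : Continuous (fun p : ℝ × ℝ => g1 p.1 * g2 p.2) :=
      (hg1c.comp continuous_fst).mul (hg2c.comp continuous_snd)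
    have hGint : IntegrableOn (fun p : ℝ × ℝ => g1 p.1 * g2 p.2) (Omega2R lx ly) :=
      hGc.continuousOn.integrableOn_compact hcomp
    have hmono : ∫ p in Omega2R lx ly, |pdx E12 p| ≤
        ∫ p in Omega2R lx ly, g1 p.1 * g2 p.2 := by
      apply setIntegral_mono_on hfint hGint hmeasΩ
      intro p hp
      exact hpdE p (hsub hp)
    refine le_trans hmono ?_
    have hprod : ∫ p in Omega2R lx ly, g1 p.1 * g2 p.2 =
        (∫ x in Icc (0:ℝ) (1 - lx), g1 x) * ∫ y in (Icc (0:ℝ) ly ∪ Icc (1 - ly) 1), g2 y := by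
      rw [Omega2R, MeasureTheory.Measure.volume_eq_prod ℝ ℝ]
      exact MeasureTheory.setIntegral_prod_mul g1 g2 _ _
    rw [hprod]
    have hAB : (∫ x in Icc (0:ℝ) (1 - lx), g1 x) * (∫ y in (Icc (0:ℝ) ly ∪ Icc (1 - ly) 1), g2 y)
        ≤ (C0 * ε⁻¹ * (ε / β * (N:ℝ) ^ (-(5/2 : ℝ)))) * (2 * s) := by
      apply mul_le_mul hx1 hy1 hy0 (by positivity)
    refine le_trans hAB ?_
    have hss : ε⁻¹ * ε * s = ε ^ ((1:ℝ)/2) := by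
      rw [hs_def, Real.sqrt_eq_rpow]
      field_simp
    calc (C0 * ε⁻¹ * (ε / β * (N:ℝ) ^ (-(5/2 : ℝ)))) * (2 * s)
        = (2 * C0 / β) * ((ε⁻¹ * ε * s) * (N:ℝ) ^ (-(5/2 : ℝ))) := by ring
      _ = (2 * C0 / β) * (ε ^ ((1:ℝ)/2) * (N:ℝ) ^ (-(5/2 : ℝ))) := by rw [hss]
      _ ≤ (32 * C0 / β) * (ε ^ ((1:ℝ)/2) * (N:ℝ) ^ (-(5/2 : ℝ))) := by
          have hpos : (0:ℝ) ≤ ε ^ ((1:ℝ)/2) * (N:ℝ) ^ (-(5/2 : ℝ)) := by positivity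
          apply mul_le_mul_of_nonneg_right ?_ hpos
          gcongr
          linarith

      _ = 32 * C0 / β * ε ^ ((1:ℝ)/2) * (N:ℝ) ^ (-(5/2 : ℝ)) := by ring
  · -- part 2: the interpolant
    obtain ⟨hIc, hIbil, hInod⟩ := hI
    obtain ⟨m6, hNm⟩ := hN6
    have hm6 : 1 ≤ m6 := by omega
    have hNR : (N:ℝ) = 6 * (m6:ℝ) := by rw [hNm]; push_cast; ring
    have hm6R : (0:ℝ) < (m6:ℝ) := by exact_mod_cast hm6
    set kst : ℝ := 3 * ly / (N:ℝ) with hkst_def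
    have hkstpos : 0 < kst := by rw [hkst_def]; positivity
    have hstepx : (0:ℝ) < 2 * (1 - lx) / (N:ℝ) := by
      apply div_pos (by linarith) hNpos
    have hXstep : ∀ k : ℕ, k + 1 ≤ N / 2 →
        meshX N lx (k+1) - meshX N lx k = 2 * (1 - lx) / (N:ℝ) := by
      intro k hk
      rw [CornerAux.meshX_eq hk, CornerAux.meshX_eq (by omega : k ≤ N / 2)]
      push_cast; ring
    have hX1le : ∀ k : ℕ, k + 1 ≤ N / 2 → meshX N lx (k+1) ≤ 1 - lx := by
      intro k hk
      have h1 : meshX N lx (k+1) = ((k+1:ℕ):ℝ) * (2*(1-lx)/(N:ℝ)) := CornerAux.meshX_eq hk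
      have h2 : (1:ℝ) - lx = ((N/2:ℕ):ℝ) * (2*(1-lx)/(N:ℝ)) := by
        conv_lhs => rw [← CornerAux.meshX_half (⟨m6, hNm⟩ : 6 ∣ N) hN0]
        exact CornerAux.meshX_eq (le_refl (N/2))
      rw [h1]
      nth_rewrite 2 [h2]
      apply mul_le_mul_of_nonneg_right _ hstepx.le
      exact_mod_cast hk
    have hXnn : ∀ k : ℕ, k ≤ N / 2 → 0 ≤ meshX N lx k := by
      intro k hk
      rw [CornerAux.meshX_eq hk]
      positivity
    have hlyN : ((N / 3 : ℕ) : ℝ) * kst = ly := by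
      have h3 : N / 3 = 2 * m6 := by omega
      rw [h3, hkst_def, hNR]
      push_cast
      field_simp
      ring
    have hYfacts : ∀ j : ℕ, (j < N / 3 ∨ (2 * N / 3 ≤ j ∧ j < N)) →
        0 ≤ meshY N ly j ∧ meshY N ly (j+1) ≤ 1 ∧ meshY N ly (j+1) - meshY N ly j = kst := by
      intro j hj
      rcases hj with hj | ⟨hj1, hj2⟩
      · have e0 : meshY N ly j = (j:ℝ) * kst := CornerAux.meshY_bot (by omega)
        have e1 : meshY N ly (j+1) = ((j+1 : ℕ):ℝ) * kst := CornerAux.meshY_bot (by omega)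
        have hle : ((j+1:ℕ):ℝ) * kst ≤ ly := by
          rw [← hlyN]
          apply mul_le_mul_of_nonneg_right _ hkstpos.le
          exact_mod_cast (by omega : j + 1 ≤ N / 3)
        refine ⟨by rw [e0]; positivity, by rw [e1]; linarith, ?_⟩
        rw [e0, e1]; push_cast; ring
      · have e0 : meshY N ly j = 1 - ((N:ℝ) - (j:ℝ)) * kst :=
          CornerAux.meshY_top ⟨m6, hNm⟩ hN0 hj1 (by omega)
        have e1 : meshY N ly (j+1) = 1 - ((N:ℝ) - ((j:ℝ)+1)) * kst := by
          have h := CornerAux.meshY_top (N := N) (ly := ly) ⟨m6, hNm⟩ hN0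
            (by omega : 2*N/3 ≤ j+1) (by omega : j+1 ≤ N)
          rw [h]; push_cast; ring
        have hNj : ((N:ℝ) - (j:ℝ)) * kst ≤ ly := by
          rw [← hlyN]
          apply mul_le_mul_of_nonneg_right _ hkstpos.le
          have h1 : ((2*N/3 : ℕ):ℝ) ≤ (j:ℝ) := by exact_mod_cast hj1
          have h2 : ((2*N/3:ℕ):ℝ) = 4 * (m6:ℝ) := by
            have h4 : 2*N/3 = 4*m6 := by omega
            rw [h4]; push_cast; ring
          have h3 : ((N/3:ℕ):ℝ) = 2 * (m6:ℝ) := by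
            have h4 : N/3 = 2*m6 := by omega
            rw [h4]; push_cast; ring
          rw [h3]; rw [h2] at h1
          linarith [hNR]
        have hNj1 : (0:ℝ) ≤ (N:ℝ) - ((j:ℝ)+1) := by
          have h5 : (j:ℝ) + 1 ≤ (N:ℝ) := by exact_mod_cast (by omega : j + 1 ≤ N)
          linarith
        refine ⟨by rw [e0]; linarith, by rw [e1]; nlinarith [hkstpos.le], ?_⟩
        rw [e0, e1]; ring
    set Ik : ℕ → ℝ := fun k => ∫ t in (meshX N lx k)..(meshX N lx (k+1)),
      Real.exp (-β * (1 - t) / ε) with hIk_def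
    set Ψ : ℕ → ℝ := fun j => Real.exp (-(meshY N ly j) / s)
      + Real.exp (-(1 - meshY N ly (j+1)) / s) with hPsi_def
    have hexplayc : Continuous fun t : ℝ => Real.exp (-β * (1 - t) / ε) := by fun_prop
    have hIknn : ∀ k : ℕ, k + 1 ≤ N / 2 → 0 ≤ Ik k := by
      intro k hk
      simp only [hIk_def]
      apply intervalIntegral.integral_nonneg (by linarith [hXstep k hk])
      intro t _
      positivity
    have hΨnn : ∀ j : ℕ, 0 ≤ Ψ j := by
      intro j; simp only [hPsi_def]; positivity
    -- per-rectangle bound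
    have hkey : ∀ k j : ℕ, k + 1 ≤ N / 2 → j + 1 ≤ N →
        0 ≤ meshY N ly j → meshY N ly (j+1) ≤ 1 → meshY N ly (j+1) - meshY N ly j = kst →
        ∫⁻ p in Icc (meshX N lx k) (meshX N lx (k+1)) ×ˢ Icc (meshY N ly j) (meshY N ly (j+1)),
            ENNReal.ofReal |pdx EI12 p|
          ≤ ENNReal.ofReal ((C0 * ε⁻¹ * Ik k) * (kst * Ψ j)) := by
      intro k j hk hjN hy0nn hy1le hystep
      have hxstep := hXstep k hk
      have hx01 : meshX N lx k ≤ meshX N lx (k+1) := by linarith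
      have hy01 : meshY N ly j ≤ meshY N ly (j+1) := by linarith
      have hx0nn : 0 ≤ meshX N lx k := hXnn k (by omega)
      have hx11 : meshX N lx (k+1) ≤ 1 := by linarith [hX1le k hk]
      obtain ⟨a, b, c, d, hP⟩ := hIbil (k+1) (j+1) (by omega) (by omega) (by omega) hjN
      have hRect : meshRect N lx ly (k+1) (j+1)
          = Icc (meshX N lx k) (meshX N lx (k+1)) ×ˢ Icc (meshY N ly j) (meshY N ly (j+1)) := by
        simp [meshRect]
      rw [hRect] at hP
      have hm00 : ((meshX N lx k, meshY N ly j) : ℝ × ℝ) ∈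
          Icc (meshX N lx k) (meshX N lx (k+1)) ×ˢ Icc (meshY N ly j) (meshY N ly (j+1)) :=
        ⟨⟨le_rfl, hx01⟩, ⟨le_rfl, hy01⟩⟩
      have hm10 : ((meshX N lx (k+1), meshY N ly j) : ℝ × ℝ) ∈
          Icc (meshX N lx k) (meshX N lx (k+1)) ×ˢ Icc (meshY N ly j) (meshY N ly (j+1)) :=
        ⟨⟨hx01, le_rfl⟩, ⟨le_rfl, hy01⟩⟩
      have hm01 : ((meshX N lx k, meshY N ly (j+1)) : ℝ × ℝ) ∈
          Icc (meshX N lx k) (meshX N lx (k+1)) ×ˢ Icc (meshY N ly j) (meshY N ly (j+1)) :=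
        ⟨⟨le_rfl, hx01⟩, ⟨hy01, le_rfl⟩⟩
      have hm11 : ((meshX N lx (k+1), meshY N ly (j+1)) : ℝ × ℝ) ∈
          Icc (meshX N lx k) (meshX N lx (k+1)) ×ˢ Icc (meshY N ly j) (meshY N ly (j+1)) :=
        ⟨⟨hx01, le_rfl⟩, ⟨hy01, le_rfl⟩⟩
      have hE00 : E12 (meshX N lx k, meshY N ly j) = a + b * meshX N lx k + c * meshY N ly j
          + d * (meshX N lx k * meshY N ly j) := by
        rw [← hInod k j (by omega) (by omega)]; exact hP _ hm00
      have hE10 : E12 (meshX N lx (k+1), meshY N ly j) = a + b * meshX N lx (k+1) + c * meshY N ly j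
          + d * (meshX N lx (k+1) * meshY N ly j) := by
        rw [← hInod (k+1) j (by omega) (by omega)]; exact hP _ hm10
      have hE01 : E12 (meshX N lx k, meshY N ly (j+1)) = a + b * meshX N lx k + c * meshY N ly (j+1)
          + d * (meshX N lx k * meshY N ly (j+1)) := by
        rw [← hInod k (j+1) (by omega) (by omega)]; exact hP _ hm01
      have hE11 : E12 (meshX N lx (k+1), meshY N ly (j+1)) = a + b * meshX N lx (k+1)
          + c * meshY N ly (j+1) + d * (meshX N lx (k+1) * meshY N ly (j+1)) := by
        rw [← hInod (k+1) (j+1) (by omega) hjN]; exact hP _ hm11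
      have hQ0 : (2 * (1 - lx) / (N:ℝ)) * (b + d * meshY N ly j)
          = E12 (meshX N lx (k+1), meshY N ly j) - E12 (meshX N lx k, meshY N ly j) := by
        rw [hE10, hE00]; linear_combination (-(b + d * meshY N ly j)) * hxstep
      have hQ1 : (2 * (1 - lx) / (N:ℝ)) * (b + d * meshY N ly (j+1))
          = E12 (meshX N lx (k+1), meshY N ly (j+1)) - E12 (meshX N lx k, meshY N ly (j+1)) := by
        rw [hE11, hE01]; linear_combination (-(b + d * meshY N ly (j+1))) * hxstep
      -- FTC bound along a horizontal segment
      have hquot : ∀ yv : ℝ, meshY N ly j ≤ yv → yv ≤ meshY N ly (j+1) →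
          |E12 (meshX N lx (k+1), yv) - E12 (meshX N lx k, yv)| ≤ C0 * ε⁻¹ * Ik k * Ψ j := by
        intro yv h1 h2
        have hcont : Continuous fun t : ℝ => pdx E12 (t, yv) :=
          (CornerAux.pdx_continuous hE3).comp (continuous_id.prodMk continuous_const)
        have hFTC : E12 (meshX N lx (k+1), yv) - E12 (meshX N lx k, yv)
            = ∫ t in (meshX N lx k)..(meshX N lx (k+1)), pdx E12 (t, yv) :=
          (intervalIntegral.integral_eq_sub_of_hasDerivAt
            (fun t _ => CornerAux.slice_hasDerivAt hE3 yv t)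
            (hcont.intervalIntegrable (μ := volume) _ _)).symm
        rw [hFTC]
        refine le_trans (intervalIntegral.abs_integral_le_integral_abs hx01) ?_
        have hmono : ∀ t ∈ Icc (meshX N lx k) (meshX N lx (k+1)),
            |pdx E12 (t, yv)| ≤ (C0 * ε⁻¹ * Ψ j) * Real.exp (-β * (1 - t) / ε) := by
          intro t ht
          have hmem : ((t, yv) : ℝ × ℝ) ∈ UnitSq :=
            ⟨⟨le_trans hx0nn ht.1, le_trans ht.2 hx11⟩,
             ⟨le_trans hy0nn h1, le_trans h2 hy1le⟩⟩
          refine le_trans (hpdE (t, yv) hmem) ?_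
          have hΨb : Real.exp (-yv / s) + Real.exp (-(1 - yv) / s) ≤ Ψ j := by
            simp only [hPsi_def]
            apply add_le_add
            · exact Real.exp_le_exp.2
                ((div_le_div_iff_of_pos_right hsε).mpr (by linarith))
            · exact Real.exp_le_exp.2
                ((div_le_div_iff_of_pos_right hsε).mpr (by linarith))
          calc C0 * ε⁻¹ * Real.exp (-β * (1 - t) / ε)
                * (Real.exp (-yv / s) + Real.exp (-(1 - yv) / s))
              ≤ C0 * ε⁻¹ * Real.exp (-β * (1 - t) / ε) * Ψ j := by
                apply mul_le_mul_of_nonneg_left hΨb (by positivity)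
            _ = (C0 * ε⁻¹ * Ψ j) * Real.exp (-β * (1 - t) / ε) := by ring
        have hintb := intervalIntegral.integral_mono_on hx01
          (hcont.abs.intervalIntegrable (μ := volume) _ _)
          ((Continuous.intervalIntegrable (μ := volume) (by fun_prop) _ _))
          hmono
        refine le_trans hintb ?_
        rw [intervalIntegral.integral_const_mul]
        simp only [hIk_def]
        exact le_of_eq (by ring)
      have hq0 : |b + d * meshY N ly j| ≤ (C0 * ε⁻¹ * Ik k * Ψ j) / (2 * (1 - lx) / (N:ℝ)) := by
        rw [le_div_iff₀ hstepx]
        calc |b + d * meshY N ly j| * (2 * (1 - lx) / (N:ℝ))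
            = |(2 * (1 - lx) / (N:ℝ)) * (b + d * meshY N ly j)| := by
              rw [abs_mul, abs_of_pos hstepx]; ring
          _ = |E12 (meshX N lx (k+1), meshY N ly j) - E12 (meshX N lx k, meshY N ly j)| := by
              rw [hQ0]
          _ ≤ C0 * ε⁻¹ * Ik k * Ψ j := hquot _ le_rfl hy01
      have hq1 : |b + d * meshY N ly (j+1)| ≤ (C0 * ε⁻¹ * Ik k * Ψ j) / (2 * (1 - lx) / (N:ℝ)) := by
        rw [le_div_iff₀ hstepx]
        calc |b + d * meshY N ly (j+1)| * (2 * (1 - lx) / (N:ℝ))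
            = |(2 * (1 - lx) / (N:ℝ)) * (b + d * meshY N ly (j+1))| := by
              rw [abs_mul, abs_of_pos hstepx]; ring
          _ = |E12 (meshX N lx (k+1), meshY N ly (j+1)) - E12 (meshX N lx k, meshY N ly (j+1))| := by
              rw [hQ1]
          _ ≤ C0 * ε⁻¹ * Ik k * Ψ j := hquot _ hy01 le_rfl
      -- pointwise bound on the open rectangle
      set M : ℝ := (C0 * ε⁻¹ * Ik k * Ψ j) / (2 * (1 - lx) / (N:ℝ)) with hM_def
      have hMnn : 0 ≤ M := le_trans (abs_nonneg _) hq0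
      have hptwise : ∀ p ∈ Ioo (meshX N lx k) (meshX N lx (k+1)) ×ˢ
          Ioo (meshY N ly j) (meshY N ly (j+1)), |pdx EI12 p| ≤ M := by
        rintro ⟨u, v⟩ ⟨hu, hv⟩
        have hopen : IsOpen (Ioo (meshX N lx k) (meshX N lx (k+1)) ×ˢ
            Ioo (meshY N ly j) (meshY N ly (j+1))) := isOpen_Ioo.prod isOpen_Ioo
        have hsubO : Ioo (meshX N lx k) (meshX N lx (k+1)) ×ˢ
            Ioo (meshY N ly j) (meshY N ly (j+1)) ⊆
            Icc (meshX N lx k) (meshX N lx (k+1)) ×ˢ Icc (meshY N ly j) (meshY N ly (j+1)) :=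
          Set.prod_mono Set.Ioo_subset_Icc_self Set.Ioo_subset_Icc_self
        have hfe : EI12 =ᶠ[nhds ((u, v) : ℝ × ℝ)]
            (fun q : ℝ × ℝ => a + b * q.1 + c * q.2 + d * (q.1 * q.2)) := by
          filter_upwards [hopen.mem_nhds ⟨hu, hv⟩] with q hq using hP q (hsubO hq)
        have hpd : pdx EI12 (u, v) = b + d * v := by
          have hfd := Filter.EventuallyEq.fderiv_eq (𝕜 := ℝ) hfe
          have hpb := CornerAux.pdx_bilinear a b c d (u, v)
          rw [pdx] at hpb ⊢
          rw [hfd]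
          exact hpb
        rw [hpd]
        have hid : (meshY N ly (j+1) - meshY N ly j) * (b + d * v)
            = (meshY N ly (j+1) - v) * (b + d * meshY N ly j)
              + (v - meshY N ly j) * (b + d * meshY N ly (j+1)) := by ring
        have habs : kst * |b + d * v| ≤ (meshY N ly (j+1) - v) * |b + d * meshY N ly j|
            + (v - meshY N ly j) * |b + d * meshY N ly (j+1)| := by
          have h1 : kst * |b + d * v| = |(meshY N ly (j+1) - meshY N ly j) * (b + d * v)| := by
            rw [abs_mul, hystep, abs_of_pos hkstpos]
          rw [h1, hid]
          refine le_trans (abs_add_le _ _) ?_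
          rw [abs_mul, abs_mul,
            abs_of_nonneg (by linarith [hv.2] : (0:ℝ) ≤ meshY N ly (j+1) - v),
            abs_of_nonneg (by linarith [hv.1] : (0:ℝ) ≤ v - meshY N ly j)]
        have hcomb : (meshY N ly (j+1) - v) * |b + d * meshY N ly j|
            + (v - meshY N ly j) * |b + d * meshY N ly (j+1)| ≤ kst * M := by
          have c1 : (0:ℝ) ≤ meshY N ly (j+1) - v := by linarith [hv.2]
          have c2 : (0:ℝ) ≤ v - meshY N ly j := by linarith [hv.1]
          calc (meshY N ly (j+1) - v) * |b + d * meshY N ly j|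
              + (v - meshY N ly j) * |b + d * meshY N ly (j+1)|
              ≤ (meshY N ly (j+1) - v) * M + (v - meshY N ly j) * M := by
                apply add_le_add (mul_le_mul_of_nonneg_left hq0 c1)
                  (mul_le_mul_of_nonneg_left hq1 c2)
            _ = (meshY N ly (j+1) - meshY N ly j) * M := by ring
            _ = kst * M := by rw [hystep]
        have := le_trans habs hcomb
        exact le_of_mul_le_mul_left this hkstpos
      -- a.e. bound and lintegral
      have hnull : volume ((Icc (meshX N lx k) (meshX N lx (k+1)) ×ˢ
          Icc (meshY N ly j) (meshY N ly (j+1))) \ (Ioo (meshX N lx k) (meshX N lx (k+1)) ×ˢ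
          Ioo (meshY N ly j) (meshY N ly (j+1)))) = 0 := by
        apply measure_mono_null (t := ({meshX N lx k, meshX N lx (k+1)} ×ˢ (univ : Set ℝ))
          ∪ ((univ : Set ℝ) ×ˢ {meshY N ly j, meshY N ly (j+1)}))
        · rintro ⟨u, v⟩ ⟨⟨hu, hv⟩, hO⟩
          by_cases hx : u ∈ Ioo (meshX N lx k) (meshX N lx (k+1))
          · right
            refine ⟨trivial, ?_⟩
            have hyv : v ∉ Ioo (meshY N ly j) (meshY N ly (j+1)) := fun hyv => hO ⟨hx, hyv⟩
            rw [Set.mem_Ioo, not_and_or] at hyv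
            rw [Set.mem_insert_iff, Set.mem_singleton_iff]
            rcases hyv with h | h
            · push_neg at h; exact Or.inl (le_antisymm h hv.1)
            · push_neg at h; exact Or.inr (le_antisymm hv.2 h)
          · left
            refine ⟨?_, trivial⟩
            rw [Set.mem_Ioo, not_and_or] at hx
            rw [Set.mem_insert_iff, Set.mem_singleton_iff]
            rcases hx with h | h
            · push_neg at h; exact Or.inl (le_antisymm h hu.1)
            · push_neg at h; exact Or.inr (le_antisymm hu.2 h)
        · apply measure_union_null
          · rw [MeasureTheory.Measure.volume_eq_prod, MeasureTheory.Measure.prod_prod]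
            rw [((Set.finite_singleton _).insert _).measure_zero volume]
            exact zero_mul _
          · rw [MeasureTheory.Measure.volume_eq_prod, MeasureTheory.Measure.prod_prod]
            rw [((Set.finite_singleton _).insert _).measure_zero volume]
            exact mul_zero _
      have hae : ∀ᵐ p ∂(volume.restrict (Icc (meshX N lx k) (meshX N lx (k+1)) ×ˢ
          Icc (meshY N ly j) (meshY N ly (j+1)))),
          ENNReal.ofReal |pdx EI12 p| ≤ ENNReal.ofReal M := by
        have h1 := ae_restrict_of_ae (μ := volume)
          (MeasureTheory.measure_eq_zero_iff_ae_notMem.1 hnull)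
          (s := Icc (meshX N lx k) (meshX N lx (k+1)) ×ˢ Icc (meshY N ly j) (meshY N ly (j+1)))
        have h2 := MeasureTheory.ae_restrict_mem
          (μ := volume) (measurableSet_Icc.prod measurableSet_Icc :
            MeasurableSet (Icc (meshX N lx k) (meshX N lx (k+1)) ×ˢ
              Icc (meshY N ly j) (meshY N ly (j+1))))
        filter_upwards [h1, h2] with p hp1 hp2
        have hpO : p ∈ Ioo (meshX N lx k) (meshX N lx (k+1)) ×ˢ
            Ioo (meshY N ly j) (meshY N ly (j+1)) := by
          by_contra hc
          exact hp1 ⟨hp2, hc⟩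
        exact ENNReal.ofReal_le_ofReal (hptwise p hpO)
      calc ∫⁻ p in Icc (meshX N lx k) (meshX N lx (k+1)) ×ˢ
            Icc (meshY N ly j) (meshY N ly (j+1)), ENNReal.ofReal |pdx EI12 p|
          ≤ ∫⁻ _ in Icc (meshX N lx k) (meshX N lx (k+1)) ×ˢ
            Icc (meshY N ly j) (meshY N ly (j+1)), ENNReal.ofReal M :=
            lintegral_mono_ae hae
        _ = ENNReal.ofReal M * volume (Icc (meshX N lx k) (meshX N lx (k+1)) ×ˢ
            Icc (meshY N ly j) (meshY N ly (j+1))) := MeasureTheory.setLIntegral_const _ _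
        _ = ENNReal.ofReal M * (ENNReal.ofReal (2 * (1 - lx) / (N:ℝ)) * ENNReal.ofReal kst) := by
            rw [MeasureTheory.Measure.volume_eq_prod, MeasureTheory.Measure.prod_prod,
              Real.volume_Icc, Real.volume_Icc, hxstep, hystep]
        _ = ENNReal.ofReal ((C0 * ε⁻¹ * Ik k) * (kst * Ψ j)) := by
            rw [← ENNReal.ofReal_mul hstepx.le, ← ENNReal.ofReal_mul hMnn]
            simp only [hM_def]
            congr 1
            have h1lx : (0:ℝ) < 1 - lx := by linarith
            field_simp
    -- reduction to lintegral
    have step0 : ∫ p in Omega2R lx ly, |pdx EI12 p|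
        ≤ (∫⁻ p in Omega2R lx ly, ENNReal.ofReal |pdx EI12 p|).toReal := by
      by_cases hInt : IntegrableOn (fun p => |pdx EI12 p|) (Omega2R lx ly) volume
      · rw [← MeasureTheory.ofReal_integral_eq_lintegral_ofReal hInt
          (Filter.Eventually.of_forall fun p => abs_nonneg _),
          ENNReal.toReal_ofReal (setIntegral_nonneg hmeasΩ fun p _ => abs_nonneg _)]
      · rw [MeasureTheory.integral_undef hInt]
        exact ENNReal.toReal_nonneg
    refine le_trans step0 ?_
    -- covering
    have hcoverX : Icc (0:ℝ) (1 - lx) ⊆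
        ⋃ k ∈ Finset.range (N/2), Icc (meshX N lx k) (meshX N lx (k+1)) := by
      have h2 : 0 + (N/2 - 1) + 1 = N/2 := by omega
      have hc := CornerAux.cover_Icc (meshX N lx) 0 (N/2 - 1)
      rw [h2] at hc
      rw [CornerAux.meshX_zero, CornerAux.meshX_half ⟨m6, hNm⟩ hN0] at hc
      rwa [Finset.range_eq_Ico]
    have hcoverYb : Icc (0:ℝ) ly ⊆
        ⋃ j ∈ Finset.range (N/3), Icc (meshY N ly j) (meshY N ly (j+1)) := by
      have h2 : 0 + (N/3 - 1) + 1 = N/3 := by omega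
      have hc := CornerAux.cover_Icc (meshY N ly) 0 (N/3 - 1)
      rw [h2] at hc
      rw [CornerAux.meshY_zero, CornerAux.meshY_third ⟨m6, hNm⟩ hN0] at hc
      rwa [Finset.range_eq_Ico]
    have hcoverYt : Icc (1 - ly) (1:ℝ) ⊆
        ⋃ j ∈ Finset.Ico (2*N/3) N, Icc (meshY N ly j) (meshY N ly (j+1)) := by
      have h2 : 2*N/3 + (N/3 - 1) + 1 = N := by omega
      have hc := CornerAux.cover_Icc (meshY N ly) (2*N/3) (N/3 - 1)
      rw [h2] at hc
      rwa [CornerAux.meshY_twothird ⟨m6, hNm⟩ hN0, CornerAux.meshY_last ⟨m6, hNm⟩ hN0] at hc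
    set J : Finset ℕ := Finset.range (N/3) ∪ Finset.Ico (2*N/3) N with hJ_def
    have hcover : Omega2R lx ly ⊆ ⋃ q ∈ (Finset.range (N/2)) ×ˢ J,
        (Icc (meshX N lx q.1) (meshX N lx (q.1+1)) ×ˢ
          Icc (meshY N ly q.2) (meshY N ly (q.2+1))) := by
      rintro ⟨x, y⟩ ⟨hx, hy⟩
      rcases Set.mem_iUnion₂.1 (hcoverX hx) with ⟨k, hk, hxk⟩
      have hyy : ∃ j ∈ J, y ∈ Icc (meshY N ly j) (meshY N ly (j+1)) := by
        rcases hy with h | h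
        · rcases Set.mem_iUnion₂.1 (hcoverYb h) with ⟨j, hj, hyj⟩
          exact ⟨j, by rw [hJ_def]; exact Finset.mem_union_left _ hj, hyj⟩
        · rcases Set.mem_iUnion₂.1 (hcoverYt h) with ⟨j, hj, hyj⟩
          exact ⟨j, by rw [hJ_def]; exact Finset.mem_union_right _ hj, hyj⟩
      rcases hyy with ⟨j, hj, hyj⟩
      exact Set.mem_iUnion₂.2 ⟨(k, j), Finset.mem_product.2 ⟨hk, hj⟩, ⟨hxk, hyj⟩⟩
    have hJmem : ∀ j ∈ J, j < N/3 ∨ (2*N/3 ≤ j ∧ j < N) := by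
      intro j hj
      rw [hJ_def, Finset.mem_union, Finset.mem_range, Finset.mem_Ico] at hj
      tauto
    -- chain of bounds
    have hBnn : ∀ j : ℕ, 0 ≤ kst * Ψ j := fun j => mul_nonneg hkstpos.le (hΨnn j)
    have chain : ∫⁻ p in Omega2R lx ly, ENNReal.ofReal |pdx EI12 p|
        ≤ ENNReal.ofReal ((C0 * ε⁻¹ * ∑ k ∈ Finset.range (N/2), Ik k) *
            ∑ j ∈ J, kst * Ψ j) := by
      calc ∫⁻ p in Omega2R lx ly, ENNReal.ofReal |pdx EI12 p|
          ≤ ∫⁻ p in ⋃ q ∈ (Finset.range (N/2)) ×ˢ J,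
              (Icc (meshX N lx q.1) (meshX N lx (q.1+1)) ×ˢ
                Icc (meshY N ly q.2) (meshY N ly (q.2+1))),
              ENNReal.ofReal |pdx EI12 p| := lintegral_mono_set hcover
        _ ≤ ∑ q ∈ (Finset.range (N/2)) ×ˢ J,
              ∫⁻ p in (Icc (meshX N lx q.1) (meshX N lx (q.1+1)) ×ˢ
                Icc (meshY N ly q.2) (meshY N ly (q.2+1))),
              ENNReal.ofReal |pdx EI12 p| := CornerAux.lint_biUnion_le _ _ _
        _ ≤ ∑ q ∈ (Finset.range (N/2)) ×ˢ J,
              ENNReal.ofReal ((C0 * ε⁻¹ * Ik q.1) * (kst * Ψ q.2)) := by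
            apply Finset.sum_le_sum
            intro q hq
            rw [Finset.mem_product, Finset.mem_range] at hq
            obtain ⟨hq1, hq2⟩ := hq
            obtain ⟨hy0, hy1, hystep⟩ := hYfacts q.2 (hJmem q.2 hq2)
            have hqN : q.2 + 1 ≤ N := by
              rcases hJmem q.2 hq2 with h | h
              · omega
              · omega
            exact hkey q.1 q.2 (by omega) hqN hy0 hy1 hystep
        _ = ∑ k ∈ Finset.range (N/2), ∑ j ∈ J,
              ENNReal.ofReal ((C0 * ε⁻¹ * Ik k) * (kst * Ψ j)) := Finset.sum_product _ _ _
        _ = ENNReal.ofReal ((C0 * ε⁻¹ * ∑ k ∈ Finset.range (N/2), Ik k) *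
              ∑ j ∈ J, kst * Ψ j) := by
            have hAnn : ∀ k ∈ Finset.range (N/2), 0 ≤ C0 * ε⁻¹ * Ik k := by
              intro k hk
              rw [Finset.mem_range] at hk
              exact mul_nonneg (by positivity) (hIknn k (by omega))
            calc ∑ k ∈ Finset.range (N/2), ∑ j ∈ J,
                  ENNReal.ofReal ((C0 * ε⁻¹ * Ik k) * (kst * Ψ j))
                = ∑ k ∈ Finset.range (N/2),
                    ENNReal.ofReal (∑ j ∈ J, (C0 * ε⁻¹ * Ik k) * (kst * Ψ j)) := by
                  refine Finset.sum_congr rfl fun k hk => ?_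
                  rw [ENNReal.ofReal_sum_of_nonneg fun j _ => mul_nonneg (hAnn k hk) (hBnn j)]
              _ = ∑ k ∈ Finset.range (N/2),
                    ENNReal.ofReal ((C0 * ε⁻¹ * Ik k) * ∑ j ∈ J, kst * Ψ j) := by
                  refine Finset.sum_congr rfl fun k hk => ?_
                  rw [← Finset.mul_sum]
              _ = ENNReal.ofReal (∑ k ∈ Finset.range (N/2),
                    (C0 * ε⁻¹ * Ik k) * ∑ j ∈ J, kst * Ψ j) := by
                  rw [ENNReal.ofReal_sum_of_nonneg fun k hk =>
                    mul_nonneg (hAnn k hk) (Finset.sum_nonneg fun j _ => hBnn j)]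
              _ = ENNReal.ofReal ((C0 * ε⁻¹ * ∑ k ∈ Finset.range (N/2), Ik k) *
                    ∑ j ∈ J, kst * Ψ j) := by
                  rw [← Finset.sum_mul, ← Finset.mul_sum]
    -- bound the two sums
    have hSx : ∑ k ∈ Finset.range (N/2), Ik k ≤ ε / β * (N:ℝ) ^ (-(5/2:ℝ)) := by
      have hadj : ∑ k ∈ Finset.range (N/2), Ik k
          = ∫ t in (meshX N lx 0)..(meshX N lx (N/2)), Real.exp (-β * (1 - t) / ε) := by
        simp only [hIk_def]
        exact intervalIntegral.sum_integral_adjacent_intervals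
          fun k _ => hexplayc.intervalIntegrable _ _
      rw [hadj, CornerAux.meshX_zero, CornerAux.meshX_half ⟨m6, hNm⟩ hN0,
        CornerAux.integral_exp_layer hβ hε]
      have e1 : -β * (1 - (1 - lx)) / ε = -β * lx / ε := by ring
      rw [e1, hNx]
      have h3 : (0:ℝ) < Real.exp (-β * (1 - 0) / ε) := Real.exp_pos _
      have h6 : (0:ℝ) ≤ ε / β := by positivity
      exact mul_le_mul_of_nonneg_left (sub_le_self _ h3.le) h6
    have hlogN : Real.log (N:ℝ) ≤ (N:ℝ) := by
      linarith [Real.log_le_sub_one_of_pos hNpos]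
    have hkstle : kst ≤ 7.5 * s := by
      rw [hkst_def, hly, div_le_iff₀ hNpos]
      nlinarith [hsε.le, hlogN, hNpos]
    have hcardb : ((N/3 : ℕ) : ℝ) * (kst * (4/3 * s)) ≤ s / 3 := by
      calc ((N/3 : ℕ) : ℝ) * (kst * (4/3 * s)) = (((N/3 : ℕ) : ℝ) * kst) * (4/3 * s) := by ring
        _ = ly * (4/3 * s) := by rw [hlyN]
        _ ≤ s / 3 := by nlinarith [hsε.le, hly4, hlypos]
    have hexp34 : ∀ w : ℝ, 3/4 ≤ w → Real.exp (-w / s) ≤ 4/3 * s := by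
      intro w hw
      calc Real.exp (-w / s) ≤ Real.exp (-((3/4) / s)) := by
            apply Real.exp_le_exp.2
            rw [neg_div]
            apply neg_le_neg
            exact (div_le_div_iff_of_pos_right hsε).mpr hw
        _ ≤ 1 / ((3/4) / s) := CornerAux.exp_neg_le_inv (by positivity)
        _ = 4/3 * s := by field_simp
    have hSb : ∑ j ∈ Finset.range (N/3), kst * Ψ j ≤ 9 * s := by
      have hsplit : ∀ j ∈ Finset.range (N/3), kst * Ψ j
          = kst * Real.exp (-((j:ℝ) * kst) / s)
            + kst * Real.exp (-(1 - ((j+1:ℕ):ℝ) * kst) / s) := by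
        intro j hj
        rw [Finset.mem_range] at hj
        simp only [hPsi_def]
        rw [CornerAux.meshY_bot (by omega : j ≤ N/3),
          CornerAux.meshY_bot (by omega : j + 1 ≤ N/3)]
        ring
      rw [Finset.sum_congr rfl hsplit, Finset.sum_add_distrib]
      have h1 : ∑ j ∈ Finset.range (N/3), kst * Real.exp (-((j:ℝ) * kst) / s) ≤ kst + s :=
        CornerAux.step_sum hsε hkstpos _
      have h2 : ∑ j ∈ Finset.range (N/3), kst * Real.exp (-(1 - ((j+1:ℕ):ℝ) * kst) / s)
          ≤ s / 3 := by
        have hterm : ∀ j ∈ Finset.range (N/3),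
            kst * Real.exp (-(1 - ((j+1:ℕ):ℝ) * kst) / s) ≤ kst * (4/3 * s) := by
          intro j hj
          rw [Finset.mem_range] at hj
          apply mul_le_mul_of_nonneg_left _ hkstpos.le
          apply hexp34
          have hle : ((j+1:ℕ):ℝ) * kst ≤ ly := by
            rw [← hlyN]
            apply mul_le_mul_of_nonneg_right _ hkstpos.le
            exact_mod_cast (by omega : j + 1 ≤ N / 3)
          linarith
        calc ∑ j ∈ Finset.range (N/3), kst * Real.exp (-(1 - ((j+1:ℕ):ℝ) * kst) / s)
            ≤ ∑ _j ∈ Finset.range (N/3), kst * (4/3 * s) := Finset.sum_le_sum hterm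
          _ = ((N/3 : ℕ) : ℝ) * (kst * (4/3 * s)) := by
              rw [Finset.sum_const, Finset.card_range, nsmul_eq_mul]
          _ ≤ s / 3 := hcardb
      linarith
    have hSt : ∑ j ∈ Finset.Ico (2*N/3) N, kst * Ψ j ≤ 9 * s := by
      have hsplit : ∀ j ∈ Finset.Ico (2*N/3) N, kst * Ψ j
          = kst * Real.exp (-(1 - ((N:ℝ) - (j:ℝ)) * kst) / s)
            + kst * Real.exp (-(((N:ℝ) - (j:ℝ) - 1) * kst) / s) := by
        intro j hj
        rw [Finset.mem_Ico] at hj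
        simp only [hPsi_def]
        rw [CornerAux.meshY_top ⟨m6, hNm⟩ hN0 hj.1 (by omega),
          CornerAux.meshY_top ⟨m6, hNm⟩ hN0 (by omega : 2*N/3 ≤ j+1) (by omega : j+1 ≤ N)]
        rw [← hkst_def]
        have e2 : (1:ℝ) - (1 - ((N:ℝ) - ((j:ℝ)+1)) * kst) = ((N:ℝ) - (j:ℝ) - 1) * kst := by
          ring
        push_cast
        ring_nf
      rw [Finset.sum_congr rfl hsplit, Finset.sum_add_distrib]
      have h1 : ∑ j ∈ Finset.Ico (2*N/3) N, kst * Real.exp (-(1 - ((N:ℝ) - (j:ℝ)) * kst) / s)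
          ≤ s / 3 := by
        have hterm : ∀ j ∈ Finset.Ico (2*N/3) N,
            kst * Real.exp (-(1 - ((N:ℝ) - (j:ℝ)) * kst) / s) ≤ kst * (4/3 * s) := by
          intro j hj
          rw [Finset.mem_Ico] at hj
          apply mul_le_mul_of_nonneg_left _ hkstpos.le
          apply hexp34
          have hle : ((N:ℝ) - (j:ℝ)) * kst ≤ ly := by
            rw [← hlyN]
            apply mul_le_mul_of_nonneg_right _ hkstpos.le
            have h2 : ((2*N/3 : ℕ):ℝ) ≤ (j:ℝ) := by exact_mod_cast hj.1
            have h3 : ((2*N/3:ℕ):ℝ) = 4 * (m6:ℝ) := by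
              have h4 : 2*N/3 = 4*m6 := by omega
              rw [h4]; push_cast; ring
            have h5 : ((N/3:ℕ):ℝ) = 2 * (m6:ℝ) := by
              have h4 : N/3 = 2*m6 := by omega
              rw [h4]; push_cast; ring
            rw [h5]; rw [h3] at h2
            linarith [hNR]
          linarith
        calc ∑ j ∈ Finset.Ico (2*N/3) N, kst * Real.exp (-(1 - ((N:ℝ) - (j:ℝ)) * kst) / s)
            ≤ ∑ _j ∈ Finset.Ico (2*N/3) N, kst * (4/3 * s) := Finset.sum_le_sum hterm
          _ = ((N - 2*N/3 : ℕ) : ℝ) * (kst * (4/3 * s)) := by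
              rw [Finset.sum_const, Nat.card_Ico, nsmul_eq_mul]
          _ = ((N/3 : ℕ) : ℝ) * (kst * (4/3 * s)) := by
              congr 2
              omega
          _ ≤ s / 3 := hcardb
      have h2 : ∑ j ∈ Finset.Ico (2*N/3) N, kst * Real.exp (-(((N:ℝ) - (j:ℝ) - 1) * kst) / s)
          ≤ kst + s := by
        rw [Finset.sum_Ico_eq_sum_range]
        have hcard : N - 2*N/3 = N/3 := by omega
        rw [hcard]
        have hconv : ∀ i ∈ Finset.range (N/3),
            kst * Real.exp (-(((N:ℝ) - ((2*N/3 + i : ℕ):ℝ) - 1) * kst) / s)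
            = (fun i' : ℕ => kst * Real.exp (-((i':ℝ) * kst) / s)) (N/3 - 1 - i) := by
          intro i hi
          rw [Finset.mem_range] at hi
          have hcast : ((N/3 - 1 - i : ℕ):ℝ) = (N:ℝ) - ((2*N/3 + i : ℕ):ℝ) - 1 := by
            have e1 : N/3 - 1 - i + (2*N/3 + i) + 1 = N := by omega
            have e2 := congrArg (fun n : ℕ => (n:ℝ)) e1
            push_cast at e2 ⊢
            linarith
          simp only []
          rw [hcast]
        rw [Finset.sum_congr rfl hconv,
          Finset.sum_range_reflect (fun i' : ℕ => kst * Real.exp (-((i':ℝ) * kst) / s)) (N/3)]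
        exact CornerAux.step_sum hsε hkstpos _
      linarith
    -- final combination
    have hSJ : ∑ j ∈ J, kst * Ψ j ≤ 18 * s := by
      rw [hJ_def, Finset.sum_union (by
        rw [Finset.disjoint_left]
        intro j hj1 hj2
        rw [Finset.mem_range] at hj1
        rw [Finset.mem_Ico] at hj2
        omega)]
      linarith
    have hSxnn : 0 ≤ ∑ k ∈ Finset.range (N/2), Ik k := by
      apply Finset.sum_nonneg
      intro k hk
      rw [Finset.mem_range] at hk
      exact hIknn k (by omega)
    have hSJnn : 0 ≤ ∑ j ∈ J, kst * Ψ j := Finset.sum_nonneg fun j _ => hBnn j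
    have hreal : (C0 * ε⁻¹ * ∑ k ∈ Finset.range (N/2), Ik k) * ∑ j ∈ J, kst * Ψ j
        ≤ 32 * C0 / β * ε ^ ((1:ℝ)/2) * (N:ℝ) ^ (-(5/2:ℝ)) := by
      have hb1 : (C0 * ε⁻¹ * ∑ k ∈ Finset.range (N/2), Ik k) * ∑ j ∈ J, kst * Ψ j
          ≤ (C0 * ε⁻¹ * (ε / β * (N:ℝ) ^ (-(5/2:ℝ)))) * (18 * s) := by
        apply mul_le_mul _ hSJ hSJnn (by positivity)
        exact mul_le_mul_of_nonneg_left hSx (by positivity)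
      refine le_trans hb1 ?_
      have hss : ε⁻¹ * ε * s = ε ^ ((1:ℝ)/2) := by
        rw [hs_def, Real.sqrt_eq_rpow]
        field_simp
      calc (C0 * ε⁻¹ * (ε / β * (N:ℝ) ^ (-(5/2:ℝ)))) * (18 * s)
          = (18 * C0 / β) * ((ε⁻¹ * ε * s) * (N:ℝ) ^ (-(5/2:ℝ))) := by ring
        _ = (18 * C0 / β) * (ε ^ ((1:ℝ)/2) * (N:ℝ) ^ (-(5/2:ℝ))) := by rw [hss]
        _ ≤ (32 * C0 / β) * (ε ^ ((1:ℝ)/2) * (N:ℝ) ^ (-(5/2:ℝ))) := by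
            have hpos : (0:ℝ) ≤ ε ^ ((1:ℝ)/2) * (N:ℝ) ^ (-(5/2:ℝ)) := by positivity
            apply mul_le_mul_of_nonneg_right _ hpos
            gcongr
            linarith
        _ = 32 * C0 / β * ε ^ ((1:ℝ)/2) * (N:ℝ) ^ (-(5/2:ℝ)) := by ring
    calc (∫⁻ p in Omega2R lx ly, ENNReal.ofReal |pdx EI12 p|).toReal
        ≤ (ENNReal.ofReal ((C0 * ε⁻¹ * ∑ k ∈ Finset.range (N/2), Ik k) *
            ∑ j ∈ J, kst * Ψ j)).toReal :=
          ENNReal.toReal_mono ENNReal.ofReal_ne_top chain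
      _ = (C0 * ε⁻¹ * ∑ k ∈ Finset.range (N/2), Ik k) * ∑ j ∈ J, kst * Ψ j :=
          ENNReal.toReal_ofReal (mul_nonneg (mul_nonneg (by positivity) hSxnn) hSJnn)
      _ ≤ 32 * C0 / β * ε ^ ((1:ℝ)/2) * (N:ℝ) ^ (-(5/2:ℝ)) := hreal
end
end
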